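/- arXiv:1104.3664 — 3 statements merged into one kernel-verified Lean document; each statement's English description precedes it below -/
import Mathlib

section
/- Let k ≥ 2 and let g_1, …, g_k be real power series with finite regularity factors α(g_i) < ∞. Then for every finite subset G_n ⊆ G with δ_n > 0, the block norm of the difference between the product of the restricted matrices and the restricted matrix of the product power series satisfies b_n(K_n(g_1)·K_n(g_2)⋯K_n(g_k) − K_n(g_1·g_2⋯g_k)) ≤ ((k−1)/2)·α(g_1)·α(g_2)⋯α(g_k), where g_1⋯g_k denotes the Cauchy product of the power series. -/
open scoped BigOperators Classical
open MeasureTheory Filter ProbabilityTheory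

noncomputable section

variable {G : Type*}

/-- Entrywise powers of the kernel `W`. -/
def Wpow (W : G → G → ℝ) : ℕ → G → G → ℝ
  | 0 => fun i j => if i = j then (1 : ℝ) else 0
  | (h + 1) => fun i j => ∑' k, W i k * Wpow W h k j

/-- The infinite matrix `K(f)` associated to a power series `f`. -/
def Kmat (W : G → G → ℝ) (f : ℕ → ℝ) (i j : G) : ℝ :=
  ∑' h, f h * Wpow W h i j

/-- The finite matrix `K_n(f)`, the restriction of `K(f)` to a finite subset. -/
def Kn (W : G → G → ℝ) (f : ℕ → ℝ) (Gn : Finset G) : Matrix Gn Gn ℝ :=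
  Matrix.of fun i j => Kmat W f (i : G) (j : G)

/-- The regularity factor `α(f) = Σ_h |f_h| (h+1)`. -/
def regFactor (f : ℕ → ℝ) : ℝ := ∑' h, |f h| * (h + 1 : ℝ)

/-- `‖f‖_{1,pol} = Σ_h |f_h|`. -/
def polNorm (f : ℕ → ℝ) : ℝ := ∑' h, |f h|

/-- Cauchy product of power series. -/
def cauchy (f g : ℕ → ℝ) (h : ℕ) : ℝ :=
  ∑ k ∈ Finset.range (h + 1), f k * g (h - k)

/-- The unit power series (`1`). -/
def cauchyOne : ℕ → ℝ := fun h => if h = 0 then 1 else 0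

/-- `k`-th Cauchy power of a power series. -/
def cauchyPow (g : ℕ → ℝ) : ℕ → ℕ → ℝ
  | 0 => cauchyOne
  | (k + 1) => cauchy g (cauchyPow g k)

/-- `δ_n`: the cardinality of the boundary of `G_n`. -/
def boundary (W : G → G → ℝ) (Gn : Finset G) : ℕ :=
  ({i | i ∈ Gn ∧ ∃ j, j ∉ Gn ∧ W i j ≠ 0} : Set G).ncard

/-- The block norm `b_n(B) = (1/δ_n) Σ_{i,j} |B(i,j)|`. -/
def blockNorm (W : G → G → ℝ) (Gn : Finset G) (B : Matrix Gn Gn ℝ) : ℝ :=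
  (1 / (boundary W Gn : ℝ)) * ∑ i, ∑ j, |B i j|

/-- Evaluation of a power series at a point. -/
def fEval (f : ℕ → ℝ) (x : ℝ) : ℝ := ∑' h, f h * x ^ h

/-- The class `F_ρ`: positive on `[-1,1]`, with `log f` admitting a power series
expansion on `[-1,1]` whose regularity factor is at most `ρ`. -/
def memF (ρ : ℝ) (f : ℕ → ℝ) : Prop :=
  Summable (fun h => |f h|) ∧
  (∀ x ∈ Set.Icc (-1 : ℝ) 1, 0 < fEval f x) ∧
  ∃ g : ℕ → ℝ, Summable (fun h => |g h| * (h + 1 : ℝ)) ∧ regFactor g ≤ ρ ∧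
    ∀ x ∈ Set.Icc (-1 : ℝ) 1, Real.log (fEval f x) = fEval g x

/-- The standing hypotheses on the kernel `W`: symmetry, degree bounded by `D`,
and entries bounded by `1/D`. -/
def KernelHyp (W : G → G → ℝ) (D : ℕ) : Prop :=
  (∀ i j, W i j = W j i) ∧
  (∀ i, ({j | W i j ≠ 0} : Set G).Finite) ∧
  (∀ i, ({j | W i j ≠ 0} : Set G).ncard ≤ D) ∧
  (∀ i j, |W i j| ≤ 1 / (D : ℝ))


namespace Stmt0Aux

/-! ### generic summability toolkit -/

lemma summable_of_fin_supp {β : Type*} {f : β → ℝ} (h : (Function.support f).Finite) :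
    Summable f := by
  refine summable_of_ne_finset_zero (s := h.toFinset) (fun b hb => ?_)
  by_contra hb'
  exact hb (h.mem_toFinset.2 hb')

lemma tsum_ne_zero_imp {β : Type*} {f : β → ℝ} (h : ∑' b, f b ≠ 0) : ∃ b, f b ≠ 0 := by
  by_contra hc
  push_neg at hc
  exact h (by simp [hc])

lemma tsum_split {β : Type*} (P : β → Prop) [DecidablePred P] {f : β → ℝ} (hf : Summable f) :
    ∑' b, f b = (∑' b, if P b then f b else 0) + ∑' b, if P b then 0 else f b := by
  have h1 : Summable (fun b => if P b then f b else 0) := by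
    rw [← summable_abs_iff]
    refine Summable.of_nonneg_of_le (fun b => abs_nonneg _) (fun b => ?_)
      (summable_abs_iff.2 hf)
    by_cases h : P b <;> simp [h, abs_nonneg]
  have h2 : Summable (fun b => if P b then 0 else f b) := by
    rw [← summable_abs_iff]
    refine Summable.of_nonneg_of_le (fun b => abs_nonneg _) (fun b => ?_)
      (summable_abs_iff.2 hf)
    by_cases h : P b <;> simp [h, abs_nonneg]
  rw [← Summable.tsum_add h1 h2]
  congr 1; funext b; by_cases h : P b <;> simp [h]

/-! ### kernel structure -/

structure Ker (W : G → G → ℝ) : Prop where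
  symm : ∀ i j, W i j = W j i
  fin : ∀ i, ({j | W i j ≠ 0} : Set G).Finite
  row : ∀ i, ∑' j, |W i j| ≤ 1

variable {W : G → G → ℝ}

lemma Ker.sumRow (K : Ker W) (i : G) : Summable fun j => |W i j| := by
  refine summable_of_fin_supp ((K.fin i).subset ?_)
  intro j hj
  simp only [Function.mem_support, abs_ne_zero] at hj
  exact hj

lemma Ker.sumRow' (K : Ker W) (i : G) : Summable fun j => W i j :=
  summable_abs_iff.1 (K.sumRow i)

/-! ### Wpow basics -/

lemma Wpow_fin (K : Ker W) : ∀ (h : ℕ) (i : G), ({j | Wpow W h i j ≠ 0} : Set G).Finite := by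
  intro h
  induction h with
  | zero =>
    intro i
    refine Set.Finite.subset (Set.finite_singleton i) ?_
    intro j hj
    simp only [Set.mem_setOf_eq, Wpow] at hj
    by_contra hc
    simp only [Set.mem_singleton_iff] at hc
    exact hj (if_neg (fun hij => hc hij.symm))
  | succ h ih =>
    intro i
    refine Set.Finite.subset ((K.fin i).biUnion (fun k _ => ih k)) ?_
    intro j hj
    simp only [Set.mem_setOf_eq, Wpow] at hj
    obtain ⟨k, hk⟩ := tsum_ne_zero_imp hj
    have h1 : W i k ≠ 0 := fun hh => hk (by simp [hh])
    have h2 : Wpow W h k j ≠ 0 := fun hh => hk (by simp [hh])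
    exact Set.mem_biUnion h1 h2

lemma Wpow_summable (K : Ker W) (h : ℕ) (i : G) {c : G → ℝ} :
    Summable fun j => c j * Wpow W h i j := by
  refine summable_of_fin_supp ((Wpow_fin K h i).subset ?_)
  intro j hj
  simp only [Function.mem_support] at hj
  simp only [Set.mem_setOf_eq]
  intro hz
  exact hj (by rw [hz, mul_zero])

lemma Wpow_summable_abs (K : Ker W) (h : ℕ) (i : G) {c : G → ℝ} :
    Summable fun j => c j * |Wpow W h i j| := by
  refine summable_of_fin_supp ((Wpow_fin K h i).subset ?_)
  intro j hj
  simp only [Function.mem_support] at hj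
  simp only [Set.mem_setOf_eq]
  intro hz
  exact hj (by rw [hz, abs_zero, mul_zero])

end Stmt0Aux

namespace Stmt0Aux

variable {W : G → G → ℝ}

lemma summable_prod_fin {β γ : Type*} {f : β × γ → ℝ} {s : Set (β × γ)} (hs : s.Finite)
    (h : ∀ p, f p ≠ 0 → p ∈ s) : Summable f :=
  summable_of_fin_supp (hs.subset h)

lemma tsum_tsum_comm_of_fin {β γ : Type*} {f : β → γ → ℝ} {S : Set β} {T : Set γ}
    (hS : S.Finite) (hT : T.Finite) (h : ∀ b c, f b c ≠ 0 → b ∈ S ∧ c ∈ T) :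
    ∑' b, ∑' c, f b c = ∑' c, ∑' b, f b c := by
  have hsum : Summable (fun p : β × γ => f p.1 p.2) :=
    summable_prod_fin (hS.prod hT) (fun p hp => (h p.1 p.2 hp))
  have e1 : ∑' (p : β × γ), f p.1 p.2 = ∑' b, ∑' c, f b c := Summable.tsum_prod hsum
  have hsw : Summable (fun p : γ × β => f p.2 p.1) := by
    simpa using hsum.prod_symm
  have e2 : ∑' (p : γ × β), f p.2 p.1 = ∑' c, ∑' b, f b c := Summable.tsum_prod hsw
  have e3 : ∑' (p : γ × β), f p.2 p.1 = ∑' (p : β × γ), f p.1 p.2 := by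
    simpa using (Equiv.prodComm γ β).tsum_eq (fun p : β × γ => f p.1 p.2)
  rw [← e1, ← e3, e2]

lemma Wpow_abs_summable (K : Ker W) (h : ℕ) (i : G) :
    Summable fun j => |Wpow W h i j| := by
  refine summable_of_fin_supp ((Wpow_fin K h i).subset ?_)
  intro j hj
  simp only [Function.mem_support, abs_ne_zero] at hj
  exact hj

lemma Wpow_row (K : Ker W) : ∀ (h : ℕ) (i : G), ∑' j, |Wpow W h i j| ≤ 1 := by
  intro h
  induction h with
  | zero =>
    intro i
    have : (fun j => |Wpow W 0 i j|) = fun j => if j = i then (1 : ℝ) else 0 := by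
      funext j
      by_cases hij : j = i
      · subst hij; simp [Wpow]
      · have h2 : ¬ i = j := fun hh => hij hh.symm
        simp [Wpow, hij, h2]
    rw [this, tsum_ite_eq]
  | succ h ih =>
    intro i
    have hT : (⋃ k ∈ {k | W i k ≠ 0}, {j | Wpow W h k j ≠ 0}).Finite :=
      (K.fin i).biUnion (fun k _ => Wpow_fin K h k)
    have step1 : ∑' j, |Wpow W (h+1) i j| ≤ ∑' j, ∑' k, |W i k| * |Wpow W h k j| := by
      refine Summable.tsum_le_tsum (fun j => ?_) (Wpow_abs_summable K (h+1) i) ?_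
      · show |∑' k, W i k * Wpow W h k j| ≤ _
        have hs : Summable fun k => |W i k * Wpow W h k j| := by
          refine summable_of_fin_supp ((K.fin i).subset ?_)
          intro k hk
          simp only [Function.mem_support, abs_ne_zero] at hk
          simp only [Set.mem_setOf_eq]
          intro hz; exact hk (by rw [hz, zero_mul])
        simpa [Real.norm_eq_abs, abs_mul] using
          norm_tsum_le_tsum_norm (f := fun k => W i k * Wpow W h k j)
            (by simpa [Real.norm_eq_abs, abs_mul] using hs)
      · refine summable_of_fin_supp (hT.subset ?_)
        intro j hj
        simp only [Function.mem_support] at hj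
        obtain ⟨k, hk⟩ := tsum_ne_zero_imp hj
        have h1 : W i k ≠ 0 := fun hh => hk (by simp [hh])
        have h2 : Wpow W h k j ≠ 0 := fun hh => hk (by simp [hh])
        exact Set.mem_biUnion h1 h2
    have step2 : ∑' j, ∑' k, |W i k| * |Wpow W h k j|
        = ∑' k, ∑' j, |W i k| * |Wpow W h k j| := by
      refine tsum_tsum_comm_of_fin hT (K.fin i) (fun j k hjk => ?_)
      constructor
      · have h1 : W i k ≠ 0 := fun hh => hjk (by simp [hh])
        have h2 : Wpow W h k j ≠ 0 := fun hh => hjk (by simp [hh])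
        exact Set.mem_biUnion h1 h2
      · exact fun hh => hjk (by simp [hh])
    have step3 : ∑' k, ∑' j, |W i k| * |Wpow W h k j| ≤ ∑' k, |W i k| := by
      refine Summable.tsum_le_tsum (fun k => ?_) ?_ (K.sumRow i)
      · rw [tsum_mul_left]
        exact mul_le_of_le_one_right (abs_nonneg _) (ih k)
      · refine summable_of_fin_supp ((K.fin i).subset ?_)
        intro k hk
        simp only [Function.mem_support] at hk
        simp only [Set.mem_setOf_eq]
        intro hz
        exact hk (by simp [hz])
    calc ∑' j, |Wpow W (h+1) i j| ≤ ∑' j, ∑' k, |W i k| * |Wpow W h k j| := step1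
      _ = _ := step2
      _ ≤ ∑' k, |W i k| := step3
      _ ≤ 1 := K.row i

lemma Wpow_abs_le_one (K : Ker W) (h : ℕ) (i j : G) : |Wpow W h i j| ≤ 1 :=
  le_trans (Summable.le_tsum (Wpow_abs_summable K h i) j (fun _ _ => abs_nonneg _)) (Wpow_row K h i)

end Stmt0Aux

namespace Stmt0Aux

variable {W : G → G → ℝ}

lemma abs_tsum_le {β : Type*} {f : β → ℝ} (h : Summable fun b => |f b|) :
    |∑' b, f b| ≤ ∑' b, |f b| := by
  simpa [Real.norm_eq_abs] using
    norm_tsum_le_tsum_norm (f := f) (by simpa [Real.norm_eq_abs] using h)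

lemma tsum_delta_mul {β : Type*} (b : β) (u : β → ℝ) :
    ∑' c, (if b = c then (1 : ℝ) else 0) * u c = u b := by
  have : (fun c => (if b = c then (1 : ℝ) else 0) * u c)
      = fun c => if c = b then u b else 0 := by
    funext c
    by_cases hc : c = b
    · subst hc; simp
    · have : ¬ b = c := fun hh => hc hh.symm
      simp [this, hc]
  rw [this, tsum_ite_eq]

lemma tsum_mul_delta {β : Type*} (b : β) (u : β → ℝ) :
    ∑' c, u c * (if c = b then (1 : ℝ) else 0) = u b := by
  have : (fun c => u c * (if c = b then (1 : ℝ) else 0))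
      = fun c => if c = b then u b else 0 := by
    funext c
    by_cases hc : c = b
    · subst hc; simp
    · simp [hc]
  rw [this, tsum_ite_eq]

lemma Wpow_succ_right (K : Ker W) : ∀ (h : ℕ) (i j : G),
    Wpow W (h+1) i j = ∑' l, Wpow W h i l * W l j := by
  intro h
  induction h with
  | zero =>
    intro i j
    show ∑' k, W i k * Wpow W 0 k j = ∑' l, Wpow W 0 i l * W l j
    have e1 : ∑' k, W i k * Wpow W 0 k j = W i j := by
      show ∑' k, W i k * (if k = j then (1:ℝ) else 0) = W i j
      exact tsum_mul_delta j (fun k => W i k)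
    have e2 : ∑' l, Wpow W 0 i l * W l j = W i j := by
      show ∑' l, (if i = l then (1:ℝ) else 0) * W l j = W i j
      exact tsum_delta_mul i (fun l => W l j)
    rw [e1, e2]
  | succ h ih =>
    intro i j
    show ∑' k, W i k * Wpow W (h+1) k j = ∑' l, Wpow W (h+1) i l * W l j
    have e1 : ∀ k, W i k * Wpow W (h+1) k j = ∑' l, W i k * (Wpow W h k l * W l j) := by
      intro k
      rw [ih k j, tsum_mul_left]
    have e2 : ∑' k, W i k * Wpow W (h+1) k j
        = ∑' k, ∑' l, W i k * (Wpow W h k l * W l j) := tsum_congr e1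
    have hswap : ∑' k, ∑' l, W i k * (Wpow W h k l * W l j)
        = ∑' l, ∑' k, W i k * (Wpow W h k l * W l j) := by
      refine tsum_tsum_comm_of_fin (K.fin i)
        ((K.fin i).biUnion (fun k _ => Wpow_fin K h k)) (fun k l hkl => ?_)
      have h1 : W i k ≠ 0 := fun hh => hkl (by simp [hh])
      have h2 : Wpow W h k l ≠ 0 := fun hh => hkl (by simp [hh])
      exact ⟨h1, Set.mem_biUnion h1 h2⟩
    have e3 : ∀ l, ∑' k, W i k * (Wpow W h k l * W l j)
        = Wpow W (h+1) i l * W l j := by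
      intro l
      have : (fun k => W i k * (Wpow W h k l * W l j))
          = fun k => (W i k * Wpow W h k l) * W l j := by
        funext k; ring
      rw [this, tsum_mul_right]
      rfl
    rw [e2, hswap]
    exact tsum_congr e3

lemma Wpow_symm (K : Ker W) : ∀ (h : ℕ) (i j : G), Wpow W h i j = Wpow W h j i := by
  intro h
  induction h with
  | zero =>
    intro i j
    show (if i = j then (1:ℝ) else 0) = (if j = i then (1:ℝ) else 0)
    simp [eq_comm]
  | succ h ih =>
    intro i j
    show ∑' k, W i k * Wpow W h k j = Wpow W (h+1) j i
    rw [Wpow_succ_right K h j i]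
    refine tsum_congr (fun k => ?_)
    rw [ih k j, K.symm i k]
    ring

lemma Wpow_add (K : Ker W) : ∀ (a b : ℕ) (i j : G),
    Wpow W (a + b) i j = ∑' l, Wpow W a i l * Wpow W b l j := by
  intro a
  induction a with
  | zero =>
    intro b i j
    rw [Nat.zero_add]
    have e : ∑' l, Wpow W 0 i l * Wpow W b l j = Wpow W b i j := by
      have he : (fun l => Wpow W 0 i l * Wpow W b l j)
          = fun l => (if i = l then (1:ℝ) else 0) * Wpow W b l j := rfl
      rw [he, tsum_delta_mul i (fun l => Wpow W b l j)]
    exact e.symm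
  | succ a ih =>
    intro b i j
    have : a + 1 + b = (a + b) + 1 := by omega
    rw [this]
    show ∑' k, W i k * Wpow W (a+b) k j = _
    have e1 : ∑' k, W i k * Wpow W (a+b) k j
        = ∑' k, ∑' l, W i k * (Wpow W a k l * Wpow W b l j) := by
      refine tsum_congr (fun k => ?_)
      rw [ih b k j, tsum_mul_left]
    have hswap : ∑' k, ∑' l, W i k * (Wpow W a k l * Wpow W b l j)
        = ∑' l, ∑' k, W i k * (Wpow W a k l * Wpow W b l j) := by
      refine tsum_tsum_comm_of_fin (K.fin i)
        ((K.fin i).biUnion (fun k _ => Wpow_fin K a k)) (fun k l hkl => ?_)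
      have h1 : W i k ≠ 0 := fun hh => hkl (by simp [hh])
      have h2 : Wpow W a k l ≠ 0 := fun hh => hkl (by simp [hh])
      exact ⟨h1, Set.mem_biUnion h1 h2⟩
    have e3 : ∀ l, ∑' k, W i k * (Wpow W a k l * Wpow W b l j)
        = Wpow W (a+1) i l * Wpow W b l j := by
      intro l
      have : (fun k => W i k * (Wpow W a k l * Wpow W b l j))
          = fun k => (W i k * Wpow W a k l) * Wpow W b l j := by
        funext k; ring
      rw [this, tsum_mul_right]
      rfl
    rw [e1, hswap]
    exact tsum_congr e3

end Stmt0Aux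

namespace Stmt0Aux

variable {W : G → G → ℝ}

/-! ### restricted kernels and the boundary -/

def Vker (W : G → G → ℝ) (Gn : Finset G) : G → G → ℝ :=
  fun a b => if a ∈ Gn ∧ b ∈ Gn then W a b else 0

def Eker (W : G → G → ℝ) (Gn : Finset G) : G → G → ℝ :=
  fun a b => if a ∈ Gn ∧ b ∉ Gn then W a b else 0

def bdF (W : G → G → ℝ) (Gn : Finset G) : Finset G :=
  Gn.filter (fun a => ∃ b, b ∉ Gn ∧ W a b ≠ 0)

lemma boundary_eq (W : G → G → ℝ) (Gn : Finset G) :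
    boundary W Gn = (bdF W Gn).card := by
  rw [boundary, ← Set.ncard_coe_finset]
  congr 1
  ext a
  simp only [bdF, Finset.coe_filter, Set.mem_setOf_eq, Finset.mem_coe]

lemma Vker_ker (K : Ker W) (Gn : Finset G) : Ker (Vker W Gn) := by
  constructor
  · intro a b
    by_cases ha : a ∈ Gn <;> by_cases hb : b ∈ Gn <;>
      simp [Vker, ha, hb, K.symm a b]
  · intro a
    refine (K.fin a).subset ?_
    intro b hb
    simp only [Set.mem_setOf_eq, Vker] at hb ⊢
    intro hz; exact hb (by simp [hz])
  · intro a
    refine le_trans (Summable.tsum_le_tsum (fun b => ?_) ?_ (K.sumRow a)) (K.row a)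
    · by_cases h : a ∈ Gn ∧ b ∈ Gn <;> simp [Vker, h, abs_nonneg]
    · refine summable_of_fin_supp ((K.fin a).subset ?_)
      intro b hb
      simp only [Function.mem_support, abs_ne_zero, Vker] at hb
      simp only [Set.mem_setOf_eq]
      intro hz; exact hb (by simp [hz])

lemma Eker_fin (K : Ker W) (Gn : Finset G) (b : G) :
    ({c | Eker W Gn b c ≠ 0} : Set G).Finite := by
  refine (K.fin b).subset ?_
  intro c hc
  simp only [Set.mem_setOf_eq, Eker] at hc ⊢
  intro hz; exact hc (by simp [hz])

lemma Eker_row (K : Ker W) (Gn : Finset G) (b : G) :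
    ∑' c, |Eker W Gn b c| ≤ 1 := by
  refine le_trans (Summable.tsum_le_tsum (fun c => ?_) ?_ (K.sumRow b)) (K.row b)
  · by_cases h : b ∈ Gn ∧ c ∉ Gn <;> simp [Eker, h, abs_nonneg]
  · refine summable_of_fin_supp ((K.fin b).subset ?_)
    intro c hc
    simp only [Function.mem_support, abs_ne_zero, Eker] at hc
    simp only [Set.mem_setOf_eq]
    intro hz; exact hc (by simp [hz])

lemma Eker_vanish (W : G → G → ℝ) (Gn : Finset G) {b : G} (hb : b ∉ bdF W Gn) (c : G) :
    Eker W Gn b c = 0 := by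
  simp only [bdF, Finset.mem_filter, not_and, not_exists] at hb
  by_cases hbG : b ∈ Gn
  · have h2 := hb hbG c
    simp only [Eker]
    by_cases hc : c ∉ Gn
    · rw [if_pos ⟨hbG, hc⟩]
      by_contra hz
      exact (h2 hc) hz
    · rw [if_neg (fun hh => hc hh.2)]
  · simp [Eker, hbG]

end Stmt0Aux

namespace Stmt0Aux

variable {W : G → G → ℝ}

lemma Vker_pos {Gn : Finset G} {a b : G} (ha : a ∈ Gn) (hb : b ∈ Gn) :
    Vker W Gn a b = W a b := if_pos ⟨ha, hb⟩

lemma Vker_neg {Gn : Finset G} {a b : G} (h : ¬ (a ∈ Gn ∧ b ∈ Gn)) :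
    Vker W Gn a b = 0 := if_neg h

lemma Eker_pos {Gn : Finset G} {a b : G} (ha : a ∈ Gn) (hb : b ∉ Gn) :
    Eker W Gn a b = W a b := if_pos ⟨ha, hb⟩

lemma Eker_neg {Gn : Finset G} {a b : G} (h : ¬ (a ∈ Gn ∧ b ∉ Gn)) :
    Eker W Gn a b = 0 := if_neg h

lemma cross_id (K : Ker W) (Gn : Finset G) :
    ∀ (h : ℕ) (i l : G), i ∈ Gn → l ∉ Gn →
    Wpow W h i l = ∑ t ∈ Finset.range h,
      ∑' b, ∑' c, Wpow (Vker W Gn) t i b * (Eker W Gn b c * Wpow W (h-1-t) c l) := by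
  have KV : Ker (Vker W Gn) := Vker_ker K Gn
  intro h
  induction h with
  | zero =>
    intro i l hi hl
    show (if i = l then (1:ℝ) else 0) = _
    rw [if_neg (fun hh : i = l => hl (hh ▸ hi)), Finset.range_zero, Finset.sum_empty]
  | succ h ih =>
    intro i l hi hl
    set Gt : ℕ → ℝ := fun t =>
      ∑' b, ∑' c, Wpow (Vker W Gn) t i b * (Eker W Gn b c * Wpow W (h-t) c l)
    have hGtt : ∀ t, Gt t = ∑' b, ∑' c,
        Wpow (Vker W Gn) t i b * (Eker W Gn b c * Wpow W (h-t) c l) := fun t => rfl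
    have hsum0 : Summable fun k => W i k * Wpow W h k l := by
      refine summable_of_fin_supp ((K.fin i).subset ?_)
      intro k hk
      simp only [Function.mem_support] at hk
      simp only [Set.mem_setOf_eq]
      intro hz; exact hk (by rw [hz, zero_mul])
    have split : Wpow W (h+1) i l
        = (∑' k, if k ∈ Gn then W i k * Wpow W h k l else 0)
          + ∑' k, if k ∈ Gn then 0 else W i k * Wpow W h k l := by
      show ∑' k, W i k * Wpow W h k l = _
      exact tsum_split (fun k => k ∈ Gn) hsum0
    -- outer piece = Gt 0
    have hout : (∑' k, if k ∈ Gn then 0 else W i k * Wpow W h k l) = Gt 0 := by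
      have e2 : ∀ b : G, (∑' c, Wpow (Vker W Gn) 0 i b * (Eker W Gn b c * Wpow W (h-0) c l))
          = (if i = b then (1:ℝ) else 0) * ∑' c, Eker W Gn b c * Wpow W h c l := by
        intro b
        show (∑' c, (if i = b then (1:ℝ) else 0) * (Eker W Gn b c * Wpow W (h-0) c l)) = _
        rw [tsum_mul_left]
        norm_num
      rw [hGtt 0, tsum_congr e2,
        tsum_delta_mul i (fun b => ∑' c, Eker W Gn b c * Wpow W h c l)]
      refine tsum_congr (fun k => ?_)
      by_cases hk : k ∈ Gn
      · rw [if_pos hk, Eker_neg (fun hh => hh.2 hk), zero_mul]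
      · rw [if_neg hk, Eker_pos hi hk]
    -- inner piece
    have hin : (∑' k, if k ∈ Gn then W i k * Wpow W h k l else 0)
        = ∑ t ∈ Finset.range h, Gt (t+1) := by
      have e1 : (fun k => if k ∈ Gn then W i k * Wpow W h k l else 0)
          = fun k => ∑ t ∈ Finset.range h, (if k ∈ Gn then
              W i k * (∑' b, ∑' c, Wpow (Vker W Gn) t k b *
                (Eker W Gn b c * Wpow W (h-1-t) c l)) else 0) := by
        funext k
        by_cases hk : k ∈ Gn
        · simp only [if_pos hk]
          rw [ih k l hk hl, Finset.mul_sum]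
        · simp [hk]
      rw [e1]
      rw [Summable.tsum_finsetSum (fun t _ => ?_)]
      · refine Finset.sum_congr rfl (fun t _ => ?_)
        set u : G → ℝ := fun b => ∑' c, Eker W Gn b c * Wpow W (h-1-t) c l
        have hu : ∀ b, u b = ∑' c, Eker W Gn b c * Wpow W (h-1-t) c l := fun b => rfl
        have e2 : (fun k => if k ∈ Gn then
            W i k * (∑' b, ∑' c, Wpow (Vker W Gn) t k b *
              (Eker W Gn b c * Wpow W (h-1-t) c l)) else 0)
            = fun k => ∑' b, Vker W Gn i k * (Wpow (Vker W Gn) t k b * u b) := by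
          funext k
          have inner : ∀ b, (∑' c, Wpow (Vker W Gn) t k b *
              (Eker W Gn b c * Wpow W (h-1-t) c l)) = Wpow (Vker W Gn) t k b * u b := by
            intro b; rw [hu b, tsum_mul_left]
          by_cases hk : k ∈ Gn
          · rw [if_pos hk, tsum_congr inner, ← tsum_mul_left]
            refine tsum_congr (fun b => ?_)
            rw [Vker_pos hi hk]
          · rw [if_neg hk]
            symm
            have hz : ∀ b, Vker W Gn i k * (Wpow (Vker W Gn) t k b * u b) = 0 := by
              intro b
              rw [Vker_neg (fun hh => hk hh.2), zero_mul]
            rw [tsum_congr hz, tsum_zero]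
        rw [e2]
        have hswap : ∑' k, ∑' b, Vker W Gn i k * (Wpow (Vker W Gn) t k b * u b)
            = ∑' b, ∑' k, Vker W Gn i k * (Wpow (Vker W Gn) t k b * u b) := by
          refine tsum_tsum_comm_of_fin (KV.fin i)
            ((KV.fin i).biUnion (fun k _ => Wpow_fin KV t k)) (fun k b hkb => ?_)
          have h1 : Vker W Gn i k ≠ 0 := fun hh => hkb (by simp [hh])
          have h2 : Wpow (Vker W Gn) t k b ≠ 0 := fun hh => hkb (by simp [hh])
          exact ⟨h1, Set.mem_biUnion h1 h2⟩
        rw [hswap, hGtt (t+1)]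
        refine tsum_congr (fun b => ?_)
        have e3 : (fun k => Vker W Gn i k * (Wpow (Vker W Gn) t k b * u b))
            = fun k => (Vker W Gn i k * Wpow (Vker W Gn) t k b) * u b := by
          funext k; ring
        rw [e3, tsum_mul_right]
        have e4 : (∑' k, Vker W Gn i k * Wpow (Vker W Gn) t k b)
            = Wpow (Vker W Gn) (t+1) i b := rfl
        rw [e4]
        have eexp : h - (t+1) = h - 1 - t := by omega
        rw [eexp, tsum_mul_left, hu b]
      · refine summable_of_fin_supp ((K.fin i).subset ?_)
        intro k hk
        simp only [Function.mem_support] at hk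
        simp only [Set.mem_setOf_eq]
        intro hz
        refine hk ?_
        by_cases hkG : k ∈ Gn
        · rw [if_pos hkG, hz, zero_mul]
        · rw [if_neg hkG]
    have hRHS : ∑ t ∈ Finset.range (h+1),
        (∑' b, ∑' c, Wpow (Vker W Gn) t i b * (Eker W Gn b c * Wpow W (h+1-1-t) c l))
        = ∑ t ∈ Finset.range (h+1), Gt t := by
      refine Finset.sum_congr rfl (fun t _ => ?_)
      rw [hGtt t]
      have e : h + 1 - 1 - t = h - t := by omega
      rw [e]
    rw [split, hout, hin, hRHS, Finset.sum_range_succ' Gt h]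

end Stmt0Aux

namespace Stmt0Aux

variable {W : G → G → ℝ}

def cout (Gn : Finset G) : G → ℝ := fun l => if l ∈ Gn then 0 else 1

lemma cout_nonneg (Gn : Finset G) (l : G) : 0 ≤ cout Gn l := by
  rw [cout]; by_cases h : l ∈ Gn <;> simp [h]

lemma cout_le_one (Gn : Finset G) (l : G) : cout Gn l ≤ 1 := by
  rw [cout]; by_cases h : l ∈ Gn <;> simp [h]

def psiF (W : G → G → ℝ) (Gn : Finset G) (m : ℕ) (b l : G) : ℝ :=
  ∑' c, |Eker W Gn b c| * |Wpow W m c l|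

def phiF (W : G → G → ℝ) (Gn : Finset G) (t m : ℕ) (i l : G) : ℝ :=
  ∑' b, |Wpow (Vker W Gn) t i b| * psiF W Gn m b l

lemma psiF_nonneg (W : G → G → ℝ) (Gn : Finset G) (m : ℕ) (b l : G) :
    0 ≤ psiF W Gn m b l :=
  tsum_nonneg (fun c => mul_nonneg (abs_nonneg _) (abs_nonneg _))

lemma phiF_nonneg (W : G → G → ℝ) (Gn : Finset G) (t m : ℕ) (i l : G) :
    0 ≤ phiF W Gn t m i l :=
  tsum_nonneg (fun b => mul_nonneg (abs_nonneg _) (psiF_nonneg W Gn m b l))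

lemma psiF_summable (K : Ker W) (Gn : Finset G) (m : ℕ) (b l : G) :
    Summable fun c => |Eker W Gn b c| * |Wpow W m c l| := by
  refine summable_of_fin_supp ((Eker_fin K Gn b).subset ?_)
  intro c hc
  simp only [Function.mem_support] at hc
  simp only [Set.mem_setOf_eq]
  intro hz; exact hc (by rw [hz, abs_zero, zero_mul])

-- the finite set carrying the support of `phiF t m i ·`
lemma phiF_supp (K : Ker W) (Gn : Finset G) (t m : ℕ) (i : G) :
    (⋃ b ∈ {b | Wpow (Vker W Gn) t i b ≠ 0},
      ⋃ c ∈ {c | Eker W Gn b c ≠ 0}, {l | Wpow W m c l ≠ 0}).Finite := by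
  have KV : Ker (Vker W Gn) := Vker_ker K Gn
  exact (Wpow_fin KV t i).biUnion (fun b _ =>
    (Eker_fin K Gn b).biUnion (fun c _ => Wpow_fin K m c))

lemma phiF_vanish (K : Ker W) (Gn : Finset G) (t m : ℕ) (i l : G)
    (hl : l ∉ (⋃ b ∈ {b | Wpow (Vker W Gn) t i b ≠ 0},
      ⋃ c ∈ {c | Eker W Gn b c ≠ 0}, {l | Wpow W m c l ≠ 0})) :
    phiF W Gn t m i l = 0 := by
  rw [phiF]
  have hz : ∀ b, |Wpow (Vker W Gn) t i b| * psiF W Gn m b l = 0 := by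
    intro b
    by_cases hb : Wpow (Vker W Gn) t i b = 0
    · rw [hb, abs_zero, zero_mul]
    · have hψ : psiF W Gn m b l = 0 := by
        rw [psiF]
        have : ∀ c, |Eker W Gn b c| * |Wpow W m c l| = 0 := by
          intro c
          by_cases hc : Eker W Gn b c = 0
          · rw [hc, abs_zero, zero_mul]
          · have hw : Wpow W m c l = 0 := by
              by_contra hw
              exact hl (Set.mem_biUnion hb (Set.mem_biUnion hc hw))
            rw [hw, abs_zero, mul_zero]
        rw [tsum_congr this, tsum_zero]
      rw [hψ, mul_zero]
  rw [tsum_congr hz, tsum_zero]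

lemma col_bound (K : Ker W) (Gn : Finset G) (h : ℕ) (b : G) :
    ∑ i ∈ Gn, |Wpow W h i b| ≤ 1 := by
  have e : ∀ i ∈ Gn, |Wpow W h i b| = |Wpow W h b i| := fun i _ => by rw [Wpow_symm K]
  rw [Finset.sum_congr rfl e]
  exact le_trans (Summable.sum_le_tsum Gn (fun i _ => abs_nonneg _) (Wpow_abs_summable K h b))
    (Wpow_row K h b)

lemma rho_bound (K : Ker W) (Gn : Finset G) (m : ℕ) (c : G) :
    ∑' l, cout Gn l * |Wpow W m c l| ≤ 1 := by
  refine le_trans (Summable.tsum_le_tsum (fun l => ?_) (Wpow_summable_abs K m c)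
    (Wpow_abs_summable K m c)) (Wpow_row K m c)
  calc cout Gn l * |Wpow W m c l| ≤ 1 * |Wpow W m c l| :=
        mul_le_mul_of_nonneg_right (cout_le_one Gn l) (abs_nonneg _)
    _ = |Wpow W m c l| := one_mul _

def eRow (W : G → G → ℝ) (Gn : Finset G) (b : G) : ℝ := ∑' c, |Eker W Gn b c|

lemma eRow_nonneg (W : G → G → ℝ) (Gn : Finset G) (b : G) : 0 ≤ eRow W Gn b :=
  tsum_nonneg (fun c => abs_nonneg _)

lemma eRow_le_one (K : Ker W) (Gn : Finset G) (b : G) : eRow W Gn b ≤ 1 :=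
  Eker_row K Gn b

lemma eRow_vanish (W : G → G → ℝ) (Gn : Finset G) {b : G} (hb : b ∉ bdF W Gn) :
    eRow W Gn b = 0 := by
  rw [eRow]
  have : ∀ c, |Eker W Gn b c| = 0 := fun c => by rw [Eker_vanish W Gn hb, abs_zero]
  rw [tsum_congr this, tsum_zero]

lemma crossC2 (K : Ker W) (Gn : Finset G) (m : ℕ) (b : G) :
    ∑' l, cout Gn l * psiF W Gn m b l ≤ eRow W Gn b := by
  have hswap : ∑' l, ∑' c, cout Gn l * (|Eker W Gn b c| * |Wpow W m c l|)
      = ∑' c, ∑' l, cout Gn l * (|Eker W Gn b c| * |Wpow W m c l|) := by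
    refine tsum_tsum_comm_of_fin
      ((Eker_fin K Gn b).biUnion (fun c _ => Wpow_fin K m c))
      (Eker_fin K Gn b) (fun l c hlc => ?_)
    have h1 : Eker W Gn b c ≠ 0 := fun hh => hlc (by simp [hh])
    have h2 : Wpow W m c l ≠ 0 := fun hh => hlc (by simp [hh])
    exact ⟨Set.mem_biUnion h1 h2, h1⟩
  have e1 : ∑' l, cout Gn l * psiF W Gn m b l
      = ∑' c, |Eker W Gn b c| * ∑' l, cout Gn l * |Wpow W m c l| := by
    have p1 : ∀ l, cout Gn l * psiF W Gn m b l
        = ∑' c, cout Gn l * (|Eker W Gn b c| * |Wpow W m c l|) := by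
      intro l; rw [psiF, tsum_mul_left]
    rw [tsum_congr p1, hswap]
    refine tsum_congr (fun c => ?_)
    have p2 : ∀ l, cout Gn l * (|Eker W Gn b c| * |Wpow W m c l|)
        = |Eker W Gn b c| * (cout Gn l * |Wpow W m c l|) := fun l => by ring
    rw [tsum_congr p2, tsum_mul_left]
  rw [e1, eRow]
  refine Summable.tsum_le_tsum (fun c => ?_) ?_ ?_
  · exact mul_le_of_le_one_right (abs_nonneg _) (rho_bound K Gn m c)
  · refine summable_of_fin_supp ((Eker_fin K Gn b).subset ?_)
    intro c hc
    simp only [Function.mem_support] at hc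
    simp only [Set.mem_setOf_eq]
    intro hz; exact hc (by rw [hz, abs_zero, zero_mul])
  · refine summable_of_fin_supp ((Eker_fin K Gn b).subset ?_)
    intro c hc
    simp only [Function.mem_support, abs_ne_zero] at hc
    exact hc

lemma crossC (K : Ker W) (Gn : Finset G) (t m : ℕ) :
    ∑ i ∈ Gn, ∑' l, cout Gn l * phiF W Gn t m i l ≤ (boundary W Gn : ℝ) := by
  have KV : Ker (Vker W Gn) := Vker_ker K Gn
  -- C1 : rewrite the inner tsum
  have C1 : ∀ i, ∑' l, cout Gn l * phiF W Gn t m i l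
      = ∑' b, |Wpow (Vker W Gn) t i b| * ∑' l, cout Gn l * psiF W Gn m b l := by
    intro i
    have hswap : ∑' l, ∑' b, cout Gn l * (|Wpow (Vker W Gn) t i b| * psiF W Gn m b l)
        = ∑' b, ∑' l, cout Gn l * (|Wpow (Vker W Gn) t i b| * psiF W Gn m b l) := by
      refine tsum_tsum_comm_of_fin (phiF_supp K Gn t m i) (Wpow_fin KV t i)
        (fun l b hlb => ?_)
      have h1 : Wpow (Vker W Gn) t i b ≠ 0 := fun hh => hlb (by simp [hh])
      have h2 : psiF W Gn m b l ≠ 0 := fun hh => hlb (by simp [hh])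
      constructor
      · -- l in the big union
        rw [psiF] at h2
        obtain ⟨c, hc⟩ := tsum_ne_zero_imp h2
        have h3 : Eker W Gn b c ≠ 0 := fun hh => hc (by simp [hh])
        have h4 : Wpow W m c l ≠ 0 := fun hh => hc (by simp [hh])
        exact Set.mem_biUnion h1 (Set.mem_biUnion h3 h4)
      · exact h1
    have p1 : ∀ l, cout Gn l * phiF W Gn t m i l
        = ∑' b, cout Gn l * (|Wpow (Vker W Gn) t i b| * psiF W Gn m b l) := by
      intro l; rw [phiF, tsum_mul_left]
    rw [tsum_congr p1, hswap]
    refine tsum_congr (fun b => ?_)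
    have p2 : ∀ l, cout Gn l * (|Wpow (Vker W Gn) t i b| * psiF W Gn m b l)
        = |Wpow (Vker W Gn) t i b| * (cout Gn l * psiF W Gn m b l) := fun l => by ring
    rw [tsum_congr p2, tsum_mul_left]
  -- sum over i ∈ Gn, swap with tsum over b
  have C3 : ∑ i ∈ Gn, ∑' b, |Wpow (Vker W Gn) t i b| * (∑' l, cout Gn l * psiF W Gn m b l)
      = ∑' b, (∑ i ∈ Gn, |Wpow (Vker W Gn) t i b|) * ∑' l, cout Gn l * psiF W Gn m b l := by
    rw [← Summable.tsum_finsetSum (fun i _ => ?_)]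
    · refine tsum_congr (fun b => ?_)
      rw [Finset.sum_mul]
    · refine summable_of_fin_supp ((Wpow_fin KV t i).subset ?_)
      intro b hb
      simp only [Function.mem_support] at hb
      simp only [Set.mem_setOf_eq]
      intro hz; exact hb (by rw [hz, abs_zero, zero_mul])
  set q : G → ℝ := fun b => ∑' l, cout Gn l * psiF W Gn m b l with hq
  have hq0 : ∀ b, 0 ≤ q b :=
    fun b => tsum_nonneg (fun l => mul_nonneg (cout_nonneg Gn l) (psiF_nonneg W Gn m b l))
  have hqe : ∀ b, q b ≤ eRow W Gn b := fun b => crossC2 K Gn m b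
  have C4 : ∀ b, (∑ i ∈ Gn, |Wpow (Vker W Gn) t i b|) * q b
      ≤ (if b ∈ bdF W Gn then (1:ℝ) else 0) := by
    intro b
    by_cases hb : b ∈ bdF W Gn
    · rw [if_pos hb]
      refine mul_le_one₀ (col_bound KV Gn t b) (hq0 b) ?_
      exact le_trans (hqe b) (eRow_le_one K Gn b)
    · rw [if_neg hb]
      have : q b = 0 := le_antisymm (le_trans (hqe b) (le_of_eq (eRow_vanish W Gn hb))) (hq0 b)
      rw [this, mul_zero]
  have C5 : ∑' b, (∑ i ∈ Gn, |Wpow (Vker W Gn) t i b|) * q b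
      ≤ ∑' b, (if b ∈ bdF W Gn then (1:ℝ) else 0) := by
    refine Summable.tsum_le_tsum C4 ?_ ?_
    · refine summable_of_fin_supp (((bdF W Gn).finite_toSet).subset ?_)
      intro b hb
      simp only [Function.mem_support] at hb
      simp only [Finset.mem_coe]
      by_contra hbF
      have : q b = 0 := le_antisymm (le_trans (hqe b) (le_of_eq (eRow_vanish W Gn hbF))) (hq0 b)
      exact hb (by rw [this, mul_zero])
    · refine summable_of_fin_supp (((bdF W Gn).finite_toSet).subset ?_)
      intro b hb
      simp only [Function.mem_support] at hb
      simp only [Finset.mem_coe]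
      by_contra hbF
      exact hb (if_neg hbF)
  have C6 : ∑' b, (if b ∈ bdF W Gn then (1:ℝ) else 0) = (boundary W Gn : ℝ) := by
    rw [tsum_eq_sum (s := bdF W Gn) (fun b hb => if_neg hb)]
    rw [Finset.sum_ite_mem, Finset.inter_self, Finset.sum_const, nsmul_eq_mul, mul_one,
      boundary_eq]
  calc ∑ i ∈ Gn, ∑' l, cout Gn l * phiF W Gn t m i l
      = ∑' b, (∑ i ∈ Gn, |Wpow (Vker W Gn) t i b|) * q b := by
        rw [Finset.sum_congr rfl (fun i _ => C1 i)]; exact C3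
    _ ≤ ∑' b, (if b ∈ bdF W Gn then (1:ℝ) else 0) := C5
    _ = (boundary W Gn : ℝ) := C6

end Stmt0Aux

namespace Stmt0Aux

variable {W : G → G → ℝ}

lemma phiF_coutSummable (K : Ker W) (Gn : Finset G) (t m : ℕ) (i : G) :
    Summable fun l => cout Gn l * phiF W Gn t m i l := by
  refine summable_of_fin_supp ((phiF_supp K Gn t m i).subset ?_)
  intro l hl
  simp only [Function.mem_support] at hl
  by_contra hc
  exact hl (by rw [phiF_vanish K Gn t m i l hc, mul_zero])

lemma crossA (K : Ker W) (Gn : Finset G) (h : ℕ) (i : G) (hi : i ∈ Gn) :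
    ∑' l, cout Gn l * |Wpow W h i l|
      ≤ ∑ t ∈ Finset.range h, ∑' l, cout Gn l * phiF W Gn t (h-1-t) i l := by
  have KV : Ker (Vker W Gn) := Vker_ker K Gn
  have hpt : ∀ l, cout Gn l * |Wpow W h i l|
      ≤ ∑ t ∈ Finset.range h, cout Gn l * phiF W Gn t (h-1-t) i l := by
    intro l
    by_cases hl : l ∈ Gn
    · have h0 : cout Gn l = 0 := if_pos hl
      rw [h0]
      simp only [zero_mul]
      exact Finset.sum_nonneg (fun t _ => le_refl 0)
    · have h1 : cout Gn l = 1 := if_neg hl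
      rw [h1]
      simp only [one_mul]
      rw [cross_id K Gn h i l hi hl]
      refine le_trans (Finset.abs_sum_le_sum_abs _ _) (Finset.sum_le_sum (fun t _ => ?_))
      -- |At| ≤ phiF
      set m := h - 1 - t
      set w : G → ℝ := fun b => ∑' c, Eker W Gn b c * Wpow W m c l with hwdef
      have hw : ∀ b, (∑' c, Wpow (Vker W Gn) t i b * (Eker W Gn b c * Wpow W m c l))
          = Wpow (Vker W Gn) t i b * w b := fun b => tsum_mul_left
      rw [tsum_congr hw]
      have habs : |∑' b, Wpow (Vker W Gn) t i b * w b|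
          ≤ ∑' b, |Wpow (Vker W Gn) t i b * w b| := by
        refine abs_tsum_le ?_
        refine summable_of_fin_supp ((Wpow_fin KV t i).subset ?_)
        intro b hb
        simp only [Function.mem_support] at hb
        simp only [Set.mem_setOf_eq]
        intro hz; exact hb (by rw [hz, zero_mul, abs_zero])
      refine le_trans habs ?_
      rw [phiF]
      refine Summable.tsum_le_tsum (fun b => ?_) ?_ ?_
      · rw [abs_mul]
        refine mul_le_mul_of_nonneg_left ?_ (abs_nonneg _)
        have : |w b| ≤ ∑' c, |Eker W Gn b c * Wpow W m c l| := by
          refine abs_tsum_le ?_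
          refine summable_of_fin_supp ((Eker_fin K Gn b).subset ?_)
          intro c hc
          simp only [Function.mem_support] at hc
          simp only [Set.mem_setOf_eq]
          intro hz; exact hc (by rw [abs_eq_zero, hz, zero_mul])
        refine le_trans this (le_of_eq (tsum_congr (fun c => abs_mul _ _)))
      · refine summable_of_fin_supp ((Wpow_fin KV t i).subset ?_)
        intro b hb
        simp only [Function.mem_support] at hb
        simp only [Set.mem_setOf_eq]
        intro hz; exact hb (by rw [abs_eq_zero, hz, zero_mul])
      · refine summable_of_fin_supp ((Wpow_fin KV t i).subset ?_)
        intro b hb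
        simp only [Function.mem_support] at hb
        simp only [Set.mem_setOf_eq]
        intro hz; exact hb (by rw [hz, abs_zero, zero_mul])
  have hsumR : Summable fun l => ∑ t ∈ Finset.range h, cout Gn l * phiF W Gn t (h-1-t) i l :=
    summable_sum (fun t _ => phiF_coutSummable K Gn t (h-1-t) i)
  refine le_trans (Summable.tsum_le_tsum hpt (Wpow_summable_abs K h i) hsumR) ?_
  rw [Summable.tsum_finsetSum (fun t _ => phiF_coutSummable K Gn t (h-1-t) i)]

lemma cross_bound (K : Ker W) (Gn : Finset G) (h : ℕ) :
    ∑ i ∈ Gn, ∑' l, cout Gn l * |Wpow W h i l| ≤ (h : ℝ) * (boundary W Gn : ℝ) := by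
  calc ∑ i ∈ Gn, ∑' l, cout Gn l * |Wpow W h i l|
      ≤ ∑ i ∈ Gn, ∑ t ∈ Finset.range h, ∑' l, cout Gn l * phiF W Gn t (h-1-t) i l :=
        Finset.sum_le_sum (fun i hi => crossA K Gn h i hi)
    _ = ∑ t ∈ Finset.range h, ∑ i ∈ Gn, ∑' l, cout Gn l * phiF W Gn t (h-1-t) i l :=
        Finset.sum_comm
    _ ≤ ∑ t ∈ Finset.range h, (boundary W Gn : ℝ) :=
        Finset.sum_le_sum (fun t _ => crossC K Gn t (h-1-t))
    _ = (h : ℝ) * (boundary W Gn : ℝ) := by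
        rw [Finset.sum_const, Finset.card_range, nsmul_eq_mul]

end Stmt0Aux

namespace Stmt0Aux

variable {W : G → G → ℝ}

lemma tsum_tsum_comm_of_summable {β γ : Type*} {f : β → γ → ℝ}
    (hsum : Summable (fun p : β × γ => f p.1 p.2)) :
    ∑' b, ∑' c, f b c = ∑' c, ∑' b, f b c := by
  have e1 : ∑' (p : β × γ), f p.1 p.2 = ∑' b, ∑' c, f b c := Summable.tsum_prod hsum
  have hsw : Summable (fun p : γ × β => f p.2 p.1) := by
    simpa using hsum.prod_symm
  have e2 : ∑' (p : γ × β), f p.2 p.1 = ∑' c, ∑' b, f b c := Summable.tsum_prod hsw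
  have e3 : ∑' (p : γ × β), f p.2 p.1 = ∑' (p : β × γ), f p.1 p.2 := by
    simpa using (Equiv.prodComm γ β).tsum_eq (fun p : β × γ => f p.1 p.2)
  rw [← e1, ← e3, e2]

def KA (W : G → G → ℝ) (f : ℕ → ℝ) (i l : G) : ℝ := ∑' h, |f h| * |Wpow W h i l|

lemma KA_nonneg (W : G → G → ℝ) (f : ℕ → ℝ) (i l : G) : 0 ≤ KA W f i l :=
  tsum_nonneg (fun h => mul_nonneg (abs_nonneg _) (abs_nonneg _))

lemma summable_abs_fW (K : Ker W) {f : ℕ → ℝ} (hf : Summable fun n => |f n|) (i j : G) :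
    Summable fun h => |f h| * |Wpow W h i j| := by
  refine Summable.of_nonneg_of_le (fun h => mul_nonneg (abs_nonneg _) (abs_nonneg _))
    (fun h => ?_) hf
  exact mul_le_of_le_one_right (abs_nonneg _) (Wpow_abs_le_one K h i j)

lemma summable_fW (K : Ker W) {f : ℕ → ℝ} (hf : Summable fun n => |f n|) (i j : G) :
    Summable fun h => f h * Wpow W h i j := by
  rw [← summable_abs_iff]
  have e : (fun h => |f h * Wpow W h i j|) = fun h => |f h| * |Wpow W h i j| := by
    funext h; exact abs_mul _ _
  rw [e]
  exact summable_abs_fW K hf i j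

lemma Kmat_abs_le_KA (K : Ker W) {f : ℕ → ℝ} (hf : Summable fun n => |f n|) (i l : G) :
    |Kmat W f i l| ≤ KA W f i l := by
  rw [Kmat, KA]
  refine le_trans (abs_tsum_le ?_) (le_of_eq (tsum_congr (fun h => abs_mul _ _)))
  have e : (fun h => |f h * Wpow W h i l|) = fun h => |f h| * |Wpow W h i l| := by
    funext h; exact abs_mul _ _
  rw [e]
  exact summable_abs_fW K hf i l

lemma KA_le_pol (K : Ker W) {f : ℕ → ℝ} (hf : Summable fun n => |f n|) (i l : G) :
    KA W f i l ≤ polNorm f := by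
  rw [KA, polNorm]
  refine Summable.tsum_le_tsum (fun h => mul_le_of_le_one_right (abs_nonneg _)
    (Wpow_abs_le_one K h i l)) (summable_abs_fW K hf i l) hf

lemma prod_summable_fW (K : Ker W) {f : ℕ → ℝ} (hf : Summable fun n => |f n|) (i : G) :
    Summable fun pr : ℕ × G => |f pr.1| * |Wpow W pr.1 i pr.2| := by
  rw [summable_prod_of_nonneg (fun pr => mul_nonneg (abs_nonneg _) (abs_nonneg _))]
  constructor
  · intro h
    refine summable_of_fin_supp ((Wpow_fin K h i).subset ?_)
    intro l hl
    simp only [Function.mem_support] at hl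
    simp only [Set.mem_setOf_eq]
    intro hz; exact hl (by rw [hz, abs_zero, mul_zero])
  · refine Summable.of_nonneg_of_le
      (fun h => tsum_nonneg (fun l => mul_nonneg (abs_nonneg _) (abs_nonneg _)))
      (fun h => ?_) hf
    have e : (fun l : G => |f (h, l).1| * |Wpow W (h, l).1 i (h, l).2|)
        = fun l => |f h| * |Wpow W h i l| := rfl
    rw [e, tsum_mul_left]
    exact mul_le_of_le_one_right (abs_nonneg _) (Wpow_row K h i)

lemma KA_summable (K : Ker W) {f : ℕ → ℝ} (hf : Summable fun n => |f n|) (i : G) :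
    Summable fun l => KA W f i l := by
  have h1 : Summable fun pr : G × ℕ => |f pr.2| * |Wpow W pr.2 i pr.1| := by
    simpa using (prod_summable_fW K hf i).prod_symm
  exact ((summable_prod_of_nonneg
    (fun pr => mul_nonneg (abs_nonneg _) (abs_nonneg _))).1 h1).2

lemma colK (K : Ker W) {f : ℕ → ℝ} (hf : Summable fun n => |f n|) (Gn : Finset G) (l : G) :
    ∑ i ∈ Gn, |Kmat W f i l| ≤ polNorm f := by
  have step1 : ∑ i ∈ Gn, |Kmat W f i l| ≤ ∑ i ∈ Gn, KA W f i l :=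
    Finset.sum_le_sum (fun i _ => Kmat_abs_le_KA K hf i l)
  have step2 : ∑ i ∈ Gn, KA W f i l = ∑' h, ∑ i ∈ Gn, |f h| * |Wpow W h i l| := by
    rw [Summable.tsum_finsetSum (fun i _ => summable_abs_fW K hf i l)]
    exact Finset.sum_congr rfl (fun i _ => rfl)
  have step3 : ∑' h, ∑ i ∈ Gn, |f h| * |Wpow W h i l| ≤ ∑' h, |f h| := by
    refine Summable.tsum_le_tsum (fun h => ?_) ?_ hf
    · rw [← Finset.mul_sum]
      exact mul_le_of_le_one_right (abs_nonneg _) (col_bound K Gn h l)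
    · refine Summable.of_nonneg_of_le
        (fun h => Finset.sum_nonneg (fun i _ => mul_nonneg (abs_nonneg _) (abs_nonneg _)))
        (fun h => ?_) hf
      rw [← Finset.mul_sum]
      exact mul_le_of_le_one_right (abs_nonneg _) (col_bound K Gn h l)
  calc ∑ i ∈ Gn, |Kmat W f i l| ≤ ∑ i ∈ Gn, KA W f i l := step1
    _ = ∑' h, ∑ i ∈ Gn, |f h| * |Wpow W h i l| := step2
    _ ≤ ∑' h, |f h| := step3
    _ = polNorm f := rfl

end Stmt0Aux

namespace Stmt0Aux

variable {W : G → G → ℝ}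

lemma tsum_nat_antidiagonal {F : ℕ × ℕ → ℝ} (h : Summable F) :
    ∑' q, F q = ∑' m, ∑ kl ∈ Finset.HasAntidiagonal.antidiagonal m, F kl := by
  have hs : Summable (fun x : (n : ℕ) × {y // y ∈ Finset.HasAntidiagonal.antidiagonal n} =>
      F (Finset.HasAntidiagonal.sigmaAntidiagonalEquivProd x)) := by
    exact Finset.HasAntidiagonal.sigmaAntidiagonalEquivProd.summable_iff.2 h
  calc ∑' q, F q
      = ∑' c : (n : ℕ) × {y // y ∈ Finset.HasAntidiagonal.antidiagonal n},
          F (Finset.HasAntidiagonal.sigmaAntidiagonalEquivProd c) :=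
        (Finset.HasAntidiagonal.sigmaAntidiagonalEquivProd.tsum_eq F).symm
    _ = ∑' m, ∑' c : {y // y ∈ Finset.HasAntidiagonal.antidiagonal m},
          F (Finset.HasAntidiagonal.sigmaAntidiagonalEquivProd ⟨m, c⟩) := Summable.tsum_sigma hs
    _ = ∑' m, ∑ kl ∈ Finset.HasAntidiagonal.antidiagonal m, F kl := by
        refine tsum_congr (fun m => ?_)
        exact Finset.tsum_subtype (Finset.HasAntidiagonal.antidiagonal m) F

lemma Kmat_mul (K : Ker W) {f p : ℕ → ℝ} (hf : Summable fun n => |f n|)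
    (hp : Summable fun n => |p n|) (i j : G) :
    ∑' l, Kmat W f i l * Kmat W p l j = Kmat W (cauchy f p) i j := by
  -- step a : pointwise expansion into a tsum over ℕ × ℕ
  have stepa : ∀ l, Kmat W f i l * Kmat W p l j
      = ∑' q : ℕ × ℕ, (f q.1 * Wpow W q.1 i l) * (p q.2 * Wpow W q.2 l j) := by
    intro l
    refine Summable.tsum_mul_tsum (summable_fW K hf i l) (summable_fW K hp l j) ?_
    refine summable_mul_of_summable_norm (f := fun n => f n * Wpow W n i l)
      (g := fun n => p n * Wpow W n l j) ?_ ?_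
    · have e : (fun n => ‖f n * Wpow W n i l‖) = fun n => |f n| * |Wpow W n i l| := by
        funext n; rw [Real.norm_eq_abs, abs_mul]
      rw [e]; exact summable_abs_fW K hf i l
    · have e : (fun n => ‖p n * Wpow W n l j‖) = fun n => |p n| * |Wpow W n l j| := by
        funext n; rw [Real.norm_eq_abs, abs_mul]
      rw [e]; exact summable_abs_fW K hp l j
  -- global summability over (ℕ × ℕ) × G
  have hglob : Summable (fun pr : (ℕ × ℕ) × G =>
      (f pr.1.1 * Wpow W pr.1.1 i pr.2) * (p pr.1.2 * Wpow W pr.1.2 pr.2 j)) := by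
    rw [← summable_abs_iff]
    rw [summable_prod_of_nonneg (fun pr => abs_nonneg _)]
    constructor
    · intro q
      refine summable_of_fin_supp ((Wpow_fin K q.1 i).subset ?_)
      intro l hl
      simp only [Function.mem_support, abs_ne_zero] at hl
      simp only [Set.mem_setOf_eq]
      intro hz; exact hl (by rw [hz, mul_zero, zero_mul])
    · refine Summable.of_nonneg_of_le (fun q => tsum_nonneg (fun l => abs_nonneg _))
        (fun q => ?_) (summable_mul_of_summable_norm (f := fun n => |f n|)
          (g := fun n => |p n|) (by simpa using hf) (by simpa using hp))
      have hb : ∀ l : G, |(f q.1 * Wpow W q.1 i l) * (p q.2 * Wpow W q.2 l j)|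
          ≤ (|f q.1| * |p q.2|) * |Wpow W q.1 i l| := by
        intro l
        rw [abs_mul, abs_mul, abs_mul]
        have h1 : |f q.1| * |Wpow W q.1 i l| * (|p q.2| * |Wpow W q.2 l j|)
            = (|f q.1| * |p q.2|) * (|Wpow W q.1 i l| * |Wpow W q.2 l j|) := by ring
        rw [h1]
        refine mul_le_mul_of_nonneg_left ?_ (mul_nonneg (abs_nonneg _) (abs_nonneg _))
        exact mul_le_of_le_one_right (abs_nonneg _) (Wpow_abs_le_one K q.2 l j)
      refine le_trans (Summable.tsum_le_tsum hb ?_ ?_) ?_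
      · refine summable_of_fin_supp ((Wpow_fin K q.1 i).subset ?_)
        intro l hl
        simp only [Function.mem_support, abs_ne_zero] at hl
        simp only [Set.mem_setOf_eq]
        intro hz; exact hl (by rw [hz, mul_zero, zero_mul])
      · exact (Wpow_summable_abs K q.1 i (c := fun _ => |f q.1| * |p q.2|))
      · rw [tsum_mul_left]
        refine mul_le_of_le_one_right (mul_nonneg (abs_nonneg _) (abs_nonneg _)) ?_
        exact Wpow_row K q.1 i
  -- swap the order of summation
  have hswap : ∑' l, ∑' q : ℕ × ℕ, (f q.1 * Wpow W q.1 i l) * (p q.2 * Wpow W q.2 l j)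
      = ∑' q : ℕ × ℕ, ∑' l, (f q.1 * Wpow W q.1 i l) * (p q.2 * Wpow W q.2 l j) := by
    refine tsum_tsum_comm_of_summable ?_
    simpa using hglob.prod_symm
  -- step c : per q collapse over l
  have stepc : ∀ q : ℕ × ℕ, ∑' l, (f q.1 * Wpow W q.1 i l) * (p q.2 * Wpow W q.2 l j)
      = (f q.1 * p q.2) * Wpow W (q.1 + q.2) i j := by
    intro q
    have e : ∀ l, (f q.1 * Wpow W q.1 i l) * (p q.2 * Wpow W q.2 l j)
        = (f q.1 * p q.2) * (Wpow W q.1 i l * Wpow W q.2 l j) := fun l => by ring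
    rw [tsum_congr e, tsum_mul_left, ← Wpow_add K q.1 q.2 i j]
  -- step d : antidiagonal regrouping
  have hsumq : Summable (fun q : ℕ × ℕ => (f q.1 * p q.2) * Wpow W (q.1 + q.2) i j) := by
    rw [← summable_abs_iff]
    refine Summable.of_nonneg_of_le (fun q => abs_nonneg _) (fun q => ?_)
      (summable_mul_of_summable_norm (f := fun n => |f n|) (g := fun n => |p n|)
        (by simpa using hf) (by simpa using hp))
    rw [abs_mul, abs_mul]
    exact mul_le_of_le_one_right (mul_nonneg (abs_nonneg _) (abs_nonneg _))
      (Wpow_abs_le_one K _ i j)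
  have stepd : ∑' q : ℕ × ℕ, (f q.1 * p q.2) * Wpow W (q.1 + q.2) i j
      = ∑' m, cauchy f p m * Wpow W m i j := by
    rw [tsum_nat_antidiagonal hsumq]
    refine tsum_congr (fun m => ?_)
    have e1 : ∀ kl ∈ Finset.HasAntidiagonal.antidiagonal m,
        (f kl.1 * p kl.2) * Wpow W (kl.1 + kl.2) i j
          = (f kl.1 * p kl.2) * Wpow W m i j := by
      intro kl hkl
      rw [Finset.HasAntidiagonal.mem_antidiagonal] at hkl
      rw [hkl]
    rw [Finset.sum_congr rfl e1, ← Finset.sum_mul]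
    congr 1
    rw [Finset.Nat.sum_antidiagonal_eq_sum_range_succ_mk, cauchy]
  rw [tsum_congr stepa, hswap, tsum_congr stepc, stepd]
  rfl

lemma Kn_mul_diff (K : Ker W) {f p : ℕ → ℝ} (hf : Summable fun n => |f n|)
    (hp : Summable fun n => |p n|) (Gn : Finset G) (i j : Gn) :
    (Kn W f Gn * Kn W p Gn) i j - Kn W (cauchy f p) Gn i j
      = - ∑' l, cout Gn l * (Kmat W f i l * Kmat W p l j) := by
  have hsuml : Summable fun l => Kmat W f (i : G) l * Kmat W p l (j : G) := by
    rw [← summable_abs_iff]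
    refine Summable.of_nonneg_of_le (fun l => abs_nonneg _) (fun l => ?_)
      ((KA_summable K hf (i : G)).mul_right (polNorm p))
    rw [abs_mul]
    refine mul_le_mul (Kmat_abs_le_KA K hf _ _) ?_ (abs_nonneg _) (KA_nonneg _ _ _ _)
    exact le_trans (Kmat_abs_le_KA K hp _ _) (KA_le_pol K hp _ _)
  have hKP : Kmat W (cauchy f p) (i : G) (j : G)
      = (∑' l, if l ∈ Gn then Kmat W f (i:G) l * Kmat W p l (j:G) else 0)
        + ∑' l, if l ∈ Gn then 0 else Kmat W f (i:G) l * Kmat W p l (j:G) := by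
    rw [← Kmat_mul K hf hp]
    exact tsum_split (fun l => l ∈ Gn) hsuml
  have hfin : (∑' l, if l ∈ Gn then Kmat W f (i:G) l * Kmat W p l (j:G) else 0)
      = ∑ l ∈ Gn, Kmat W f (i:G) l * Kmat W p l (j:G) := by
    rw [tsum_eq_sum (s := Gn) (fun l hl => if_neg hl)]
    exact Finset.sum_congr rfl (fun l hl => if_pos hl)
  have hmul : (Kn W f Gn * Kn W p Gn) i j
      = ∑ l ∈ Gn, Kmat W f (i:G) l * Kmat W p l (j:G) := by
    rw [Matrix.mul_apply]
    rw [← Finset.sum_coe_sort Gn (fun l => Kmat W f (i:G) l * Kmat W p l (j:G))]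
    rfl
  have hcout : (∑' l, if l ∈ Gn then 0 else Kmat W f (i:G) l * Kmat W p l (j:G))
      = ∑' l, cout Gn l * (Kmat W f (i:G) l * Kmat W p l (j:G)) := by
    refine tsum_congr (fun l => ?_)
    by_cases hl : l ∈ Gn
    · rw [if_pos hl, cout, if_pos hl, zero_mul]
    · rw [if_neg hl, cout, if_neg hl, one_mul]
  have : Kn W (cauchy f p) Gn i j = Kmat W (cauchy f p) (i : G) (j : G) := rfl
  rw [this, hKP, hfin, hcout, hmul]
  ring

end Stmt0Aux

namespace Stmt0Aux

variable {W : G → G → ℝ}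

/-! ### series-level lemmas -/

lemma summable_abs_of_weighted {f : ℕ → ℝ} (h : Summable fun n => |f n| * (n + 1 : ℝ)) :
    Summable fun n => |f n| := by
  refine Summable.of_nonneg_of_le (fun n => abs_nonneg _) (fun n => ?_) h
  nlinarith [abs_nonneg (f n), Nat.cast_nonneg (α := ℝ) n]

lemma polNorm_nonneg (f : ℕ → ℝ) : 0 ≤ polNorm f :=
  tsum_nonneg (fun h => abs_nonneg _)

lemma regFactor_nonneg (f : ℕ → ℝ) : 0 ≤ regFactor f :=
  tsum_nonneg (fun h => mul_nonneg (abs_nonneg _) (by positivity))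

lemma polNorm_le_reg {f : ℕ → ℝ} (h : Summable fun n => |f n| * (n + 1 : ℝ)) :
    polNorm f ≤ regFactor f := by
  refine Summable.tsum_le_tsum (fun n => ?_) (summable_abs_of_weighted h) h
  nlinarith [abs_nonneg (f n), Nat.cast_nonneg (α := ℝ) n]

lemma cauchy_weight_le (f p : ℕ → ℝ) (m : ℕ) :
    |cauchy f p m| * (m + 1 : ℝ)
      ≤ ∑ kl ∈ Finset.HasAntidiagonal.antidiagonal m, (|f kl.1| * (kl.1 + 1 : ℝ)) * (|p kl.2| * (kl.2 + 1 : ℝ)) := by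
  have h1 : |cauchy f p m| ≤ ∑ kl ∈ Finset.HasAntidiagonal.antidiagonal m, |f kl.1| * |p kl.2| := by
    rw [cauchy, Finset.Nat.sum_antidiagonal_eq_sum_range_succ_mk
      (fun kl => |f kl.1| * |p kl.2|) m]
    refine le_trans (Finset.abs_sum_le_sum_abs _ _) (le_of_eq ?_)
    exact Finset.sum_congr rfl (fun k _ => abs_mul _ _)
  calc |cauchy f p m| * (m + 1 : ℝ)
      ≤ (∑ kl ∈ Finset.HasAntidiagonal.antidiagonal m, |f kl.1| * |p kl.2|) * (m + 1 : ℝ) :=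
        mul_le_mul_of_nonneg_right h1 (by positivity)
    _ = ∑ kl ∈ Finset.HasAntidiagonal.antidiagonal m, (|f kl.1| * |p kl.2|) * (m + 1 : ℝ) :=
        Finset.sum_mul _ _ _
    _ ≤ _ := by
        refine Finset.sum_le_sum (fun kl hkl => ?_)
        rw [Finset.HasAntidiagonal.mem_antidiagonal] at hkl
        have hc : (m : ℝ) + 1 ≤ ((kl.1 : ℝ) + 1) * ((kl.2 : ℝ) + 1) := by
          have : (kl.1 : ℝ) + (kl.2 : ℝ) = (m : ℝ) := by
            rw [← Nat.cast_add, hkl]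
          nlinarith [mul_nonneg (Nat.cast_nonneg (α := ℝ) kl.1) (Nat.cast_nonneg (α := ℝ) kl.2)]
        calc (|f kl.1| * |p kl.2|) * ((m : ℝ) + 1)
            ≤ (|f kl.1| * |p kl.2|) * (((kl.1 : ℝ) + 1) * ((kl.2 : ℝ) + 1)) :=
              mul_le_mul_of_nonneg_left hc (mul_nonneg (abs_nonneg _) (abs_nonneg _))
          _ = (|f kl.1| * ((kl.1 : ℝ) + 1)) * (|p kl.2| * ((kl.2 : ℝ) + 1)) := by ring

lemma summable_prod_weighted {f p : ℕ → ℝ}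
    (hf : Summable fun n => |f n| * (n + 1 : ℝ)) (hp : Summable fun n => |p n| * (n + 1 : ℝ)) :
    Summable fun x : ℕ × ℕ => (|f x.1| * (x.1 + 1 : ℝ)) * (|p x.2| * (x.2 + 1 : ℝ)) := by
  refine summable_mul_of_summable_norm (f := fun n => |f n| * (n + 1 : ℝ))
    (g := fun n => |p n| * (n + 1 : ℝ)) ?_ ?_
  · have e : (fun n => ‖|f n| * (n + 1 : ℝ)‖) = fun n => |f n| * (n + 1 : ℝ) := by
      funext n
      rw [Real.norm_eq_abs, abs_of_nonneg (mul_nonneg (abs_nonneg _) (by positivity))]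
    rw [e]; exact hf
  · have e : (fun n => ‖|p n| * (n + 1 : ℝ)‖) = fun n => |p n| * (n + 1 : ℝ) := by
      funext n
      rw [Real.norm_eq_abs, abs_of_nonneg (mul_nonneg (abs_nonneg _) (by positivity))]
    rw [e]; exact hp

lemma summable_cauchy_weighted {f p : ℕ → ℝ}
    (hf : Summable fun n => |f n| * (n + 1 : ℝ)) (hp : Summable fun n => |p n| * (n + 1 : ℝ)) :
    Summable fun m => |cauchy f p m| * (m + 1 : ℝ) := by
  have hS : Summable fun m => ∑ kl ∈ Finset.HasAntidiagonal.antidiagonal m,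
      (|f kl.1| * (kl.1 + 1 : ℝ)) * (|p kl.2| * (kl.2 + 1 : ℝ)) :=
    summable_sum_mul_antidiagonal_of_summable_mul
      (f := fun n => |f n| * (n + 1 : ℝ)) (g := fun n => |p n| * (n + 1 : ℝ))
      (summable_prod_weighted hf hp)
  exact Summable.of_nonneg_of_le (fun m => mul_nonneg (abs_nonneg _) (by positivity))
    (fun m => cauchy_weight_le f p m) hS

lemma regFactor_cauchy_le {f p : ℕ → ℝ}
    (hf : Summable fun n => |f n| * (n + 1 : ℝ)) (hp : Summable fun n => |p n| * (n + 1 : ℝ)) :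
    regFactor (cauchy f p) ≤ regFactor f * regFactor p := by
  have hS : Summable fun m => ∑ kl ∈ Finset.HasAntidiagonal.antidiagonal m,
      (|f kl.1| * (kl.1 + 1 : ℝ)) * (|p kl.2| * (kl.2 + 1 : ℝ)) :=
    summable_sum_mul_antidiagonal_of_summable_mul
      (f := fun n => |f n| * (n + 1 : ℝ)) (g := fun n => |p n| * (n + 1 : ℝ))
      (summable_prod_weighted hf hp)
  have e : regFactor f * regFactor p = ∑' m, ∑ kl ∈ Finset.HasAntidiagonal.antidiagonal m,
      (|f kl.1| * (kl.1 + 1 : ℝ)) * (|p kl.2| * (kl.2 + 1 : ℝ)) :=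
    Summable.tsum_mul_tsum_eq_tsum_sum_antidiagonal
      (f := fun n => |f n| * (n + 1 : ℝ)) (g := fun n => |p n| * (n + 1 : ℝ))
      hf hp (summable_prod_weighted hf hp)
  rw [regFactor, e]
  exact Summable.tsum_le_tsum (fun m => cauchy_weight_le f p m)
    (summable_cauchy_weighted hf hp) hS

lemma cauchyOne_weighted : Summable fun n => |cauchyOne n| * (n + 1 : ℝ) := by
  refine summable_of_ne_finset_zero (s := {0}) (fun n hn => ?_)
  simp only [Finset.mem_singleton] at hn
  rw [cauchyOne, if_neg hn, abs_zero, zero_mul]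

lemma regFactor_cauchyOne : regFactor cauchyOne = 1 := by
  rw [regFactor]
  have e : (fun n => |cauchyOne n| * (n + 1 : ℝ)) = fun n => if n = 0 then (1:ℝ) else 0 := by
    funext n
    by_cases hn : n = 0
    · subst hn; simp [cauchyOne]
    · simp [cauchyOne, hn]
  rw [e, tsum_ite_eq]

lemma cauchy_one_right (f : ℕ → ℝ) : cauchy f cauchyOne = f := by
  funext m
  rw [cauchy]
  rw [Finset.sum_eq_single m]
  · rw [Nat.sub_self, cauchyOne, if_pos rfl, mul_one]
  · intro k hk hkm
    rw [Finset.mem_range] at hk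
    have : m - k ≠ 0 := by omega
    rw [cauchyOne, if_neg this, mul_zero]
  · intro hm
    exact absurd (Finset.self_mem_range_succ m) hm

lemma Kmat_cauchyOne (i j : G) : Kmat W cauchyOne i j = if i = j then (1:ℝ) else 0 := by
  rw [Kmat]
  have e : (fun h => cauchyOne h * Wpow W h i j)
      = fun h => if h = 0 then Wpow W 0 i j else 0 := by
    funext h
    by_cases hh : h = 0
    · subst hh; simp [cauchyOne]
    · simp [cauchyOne, hh]
  rw [e, tsum_ite_eq]
  rfl

lemma Kn_cauchyOne (Gn : Finset G) : Kn W cauchyOne Gn = (1 : Matrix Gn Gn ℝ) := by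
  ext i j
  show Kmat W cauchyOne (i : G) (j : G) = _
  rw [Kmat_cauchyOne, Matrix.one_apply]
  by_cases hij : i = j
  · rw [if_pos hij, if_pos (by rw [hij])]
  · rw [if_neg hij, if_neg (fun hh : (i : G) = (j : G) => hij (Subtype.ext hh))]

lemma foldr_weighted (fs : List (ℕ → ℝ))
    (hfs : ∀ f ∈ fs, Summable fun n => |f n| * (n + 1 : ℝ)) :
    (Summable fun n => |fs.foldr cauchy cauchyOne n| * (n + 1 : ℝ)) ∧
      regFactor (fs.foldr cauchy cauchyOne) ≤ (fs.map regFactor).prod := by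
  induction fs with
  | nil =>
    constructor
    · exact cauchyOne_weighted
    · rw [List.foldr_nil, List.map_nil, List.prod_nil, regFactor_cauchyOne]
  | cons f rest ih =>
    have hf : Summable fun n => |f n| * (n + 1 : ℝ) := hfs f (List.mem_cons_self)
    have hrest := ih (fun q hq => hfs q (List.mem_cons_of_mem f hq))
    constructor
    · rw [List.foldr_cons]
      exact summable_cauchy_weighted hf hrest.1
    · rw [List.foldr_cons, List.map_cons, List.prod_cons]
      refine le_trans (regFactor_cauchy_le hf hrest.1) ?_
      exact mul_le_mul_of_nonneg_left hrest.2 (regFactor_nonneg f)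

end Stmt0Aux

namespace Stmt0Aux

variable {W : G → G → ℝ}

lemma absSum_mul_le {α : Type*} [Fintype α] (A B : Matrix α α ℝ) {C : ℝ}
    (hA : ∀ l, ∑ i, |A i l| ≤ C) :
    ∑ i, ∑ j, |(A * B) i j| ≤ C * ∑ l, ∑ j, |B l j| := by
  have h1 : ∀ i j : α, |(A * B) i j| ≤ ∑ l, |A i l| * |B l j| := by
    intro i j
    rw [Matrix.mul_apply]
    refine le_trans (Finset.abs_sum_le_sum_abs _ _) (le_of_eq ?_)
    exact Finset.sum_congr rfl (fun l _ => abs_mul _ _)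
  calc ∑ i, ∑ j, |(A * B) i j| ≤ ∑ i, ∑ j, ∑ l, |A i l| * |B l j| :=
        Finset.sum_le_sum (fun i _ => Finset.sum_le_sum (fun j _ => h1 i j))
    _ = ∑ i, ∑ l, ∑ j, |A i l| * |B l j| :=
        Finset.sum_congr rfl (fun i _ => Finset.sum_comm)
    _ = ∑ l, ∑ i, ∑ j, |A i l| * |B l j| := Finset.sum_comm
    _ = ∑ l, ∑ j, ∑ i, |A i l| * |B l j| :=
        Finset.sum_congr rfl (fun l _ => Finset.sum_comm)
    _ = ∑ l, ∑ j, (∑ i, |A i l|) * |B l j| :=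
        Finset.sum_congr rfl (fun l _ => Finset.sum_congr rfl
          (fun j _ => (Finset.sum_mul _ _ _).symm))
    _ ≤ ∑ l, ∑ j, C * |B l j| := by
        refine Finset.sum_le_sum (fun l _ => Finset.sum_le_sum (fun j _ => ?_))
        exact mul_le_mul_of_nonneg_right (hA l) (abs_nonneg _)
    _ = C * ∑ l, ∑ j, |B l j| := by
        rw [Finset.mul_sum]
        exact Finset.sum_congr rfl (fun l _ => by rw [Finset.mul_sum])

lemma col_mul_le {α : Type*} [Fintype α] (A B : Matrix α α ℝ) {C D : ℝ}
    (hA : ∀ l, ∑ i, |A i l| ≤ C) (hB : ∀ l, ∑ i, |B i l| ≤ D) (hC : 0 ≤ C) :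
    ∀ l, ∑ i, |(A * B) i l| ≤ C * D := by
  intro l
  have h1 : ∀ i : α, |(A * B) i l| ≤ ∑ m, |A i m| * |B m l| := by
    intro i
    rw [Matrix.mul_apply]
    refine le_trans (Finset.abs_sum_le_sum_abs _ _) (le_of_eq ?_)
    exact Finset.sum_congr rfl (fun m _ => abs_mul _ _)
  calc ∑ i, |(A * B) i l| ≤ ∑ i, ∑ m, |A i m| * |B m l| :=
        Finset.sum_le_sum (fun i _ => h1 i)
    _ = ∑ m, (∑ i, |A i m|) * |B m l| := by
        rw [Finset.sum_comm]
        exact Finset.sum_congr rfl (fun m _ => by rw [Finset.sum_mul])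
    _ ≤ ∑ m, C * |B m l| :=
        Finset.sum_le_sum (fun m _ => mul_le_mul_of_nonneg_right (hA m) (abs_nonneg _))
    _ = C * ∑ m, |B m l| := by rw [Finset.mul_sum]
    _ ≤ C * D := mul_le_mul_of_nonneg_left (hB l) hC

lemma colKn (K : Ker W) {f : ℕ → ℝ} (hf : Summable fun n => |f n|) (Gn : Finset G)
    (l : Gn) : ∑ i, |Kn W f Gn i l| ≤ polNorm f := by
  have e : ∑ i : Gn, |Kn W f Gn i l| = ∑ i ∈ Gn, |Kmat W f i (l : G)| := by
    rw [← Finset.sum_coe_sort Gn (fun i => |Kmat W f i (l : G)|)]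
    rfl
  rw [e]
  exact colK K hf Gn (l : G)

lemma prod_map_polNorm_nonneg (fs : List (ℕ → ℝ)) : 0 ≤ (fs.map polNorm).prod := by
  induction fs with
  | nil => simp
  | cons f rest ih =>
    rw [List.map_cons, List.prod_cons]
    exact mul_nonneg (polNorm_nonneg f) ih

lemma prod_map_regFactor_nonneg (fs : List (ℕ → ℝ)) : 0 ≤ (fs.map regFactor).prod := by
  induction fs with
  | nil => simp
  | cons f rest ih =>
    rw [List.map_cons, List.prod_cons]
    exact mul_nonneg (regFactor_nonneg f) ih

lemma prod_col (K : Ker W) (Gn : Finset G) (fs : List (ℕ → ℝ))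
    (hfs : ∀ f ∈ fs, Summable fun n => |f n|) :
    ∀ l : Gn, ∑ i, |(fs.map (fun f => Kn W f Gn)).prod i l| ≤ (fs.map polNorm).prod := by
  induction fs with
  | nil =>
    intro l
    rw [List.map_nil, List.prod_nil, List.map_nil, List.prod_nil]
    have e : ∀ i : Gn, |(1 : Matrix Gn Gn ℝ) i l| = if i = l then (1:ℝ) else 0 := by
      intro i
      rw [Matrix.one_apply]
      by_cases hil : i = l <;> simp [hil]
    rw [Finset.sum_congr rfl (fun i _ => e i), Finset.sum_ite_eq' Finset.univ l (fun _ => (1:ℝ))]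
    simp
  | cons f rest ih =>
    intro l
    rw [List.map_cons, List.prod_cons, List.map_cons, List.prod_cons]
    exact col_mul_le _ _ (colKn K (hfs f (List.mem_cons_self)) Gn)
      (ih (fun q hq => hfs q (List.mem_cons_of_mem f hq))) (polNorm_nonneg f) l

end Stmt0Aux

namespace Stmt0Aux

variable {W : G → G → ℝ}

lemma summable_cWW (K : Ker W) (Gn : Finset G) (h h' : ℕ) (i j : G) :
    Summable fun l => cout Gn l * (|Wpow W h i l| * |Wpow W h' l j|) := by
  refine summable_of_fin_supp ((Wpow_fin K h i).subset ?_)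
  intro l hl
  simp only [Function.mem_support] at hl
  simp only [Set.mem_setOf_eq]
  intro hz; exact hl (by rw [hz, abs_zero, zero_mul, mul_zero])

lemma tsum_cWW_le_one (K : Ker W) (Gn : Finset G) (h h' : ℕ) (i j : G) :
    ∑' l, cout Gn l * (|Wpow W h i l| * |Wpow W h' l j|) ≤ 1 := by
  refine le_trans (Summable.tsum_le_tsum (fun l => ?_) (summable_cWW K Gn h h' i j)
    (Wpow_abs_summable K h i)) (Wpow_row K h i)
  calc cout Gn l * (|Wpow W h i l| * |Wpow W h' l j|)
      ≤ 1 * (|Wpow W h i l| * 1) := by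
        refine mul_le_mul (cout_le_one Gn l)
          (mul_le_mul_of_nonneg_left (Wpow_abs_le_one K h' l j) (abs_nonneg _))
          (mul_nonneg (abs_nonneg _) (abs_nonneg _)) zero_le_one
    _ = |Wpow W h i l| := by ring

lemma T2_le (K : Ker W) (Gn : Finset G) (h h' : ℕ) :
    ∑ i ∈ Gn, ∑ j ∈ Gn, ∑' l, cout Gn l * (|Wpow W h i l| * |Wpow W h' l j|)
      ≤ (((h:ℝ) + 1) * ((h':ℝ) + 1)) / 2 * (boundary W Gn : ℝ) := by
  set T := ∑ i ∈ Gn, ∑ j ∈ Gn, ∑' l, cout Gn l * (|Wpow W h i l| * |Wpow W h' l j|) with hT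
  have b1 : T ≤ (h : ℝ) * (boundary W Gn : ℝ) := by
    rw [hT]
    refine le_trans (Finset.sum_le_sum (fun i _ => ?_)) (cross_bound K Gn h)
    -- per i: inner double ≤ ∑' l, cout l |W^h i l|
    have e1 : ∑ j ∈ Gn, ∑' l, cout Gn l * (|Wpow W h i l| * |Wpow W h' l j|)
        = ∑' l, ∑ j ∈ Gn, cout Gn l * (|Wpow W h i l| * |Wpow W h' l j|) :=
      (Summable.tsum_finsetSum (fun j _ => summable_cWW K Gn h h' i j)).symm
    rw [e1]
    refine Summable.tsum_le_tsum (fun l => ?_) ?_ (Wpow_summable_abs K h i)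
    · have e2 : ∑ j ∈ Gn, cout Gn l * (|Wpow W h i l| * |Wpow W h' l j|)
          = (cout Gn l * |Wpow W h i l|) * ∑ j ∈ Gn, |Wpow W h' l j| := by
        rw [Finset.mul_sum]
        exact Finset.sum_congr rfl (fun j _ => by ring)
      rw [e2]
      have e3 : ∑ j ∈ Gn, |Wpow W h' l j| ≤ 1 := by
        have : ∀ j ∈ Gn, |Wpow W h' l j| = |Wpow W h' j l| := fun j _ => by
          rw [Wpow_symm K]
        rw [Finset.sum_congr rfl this]
        exact col_bound K Gn h' l
      calc (cout Gn l * |Wpow W h i l|) * ∑ j ∈ Gn, |Wpow W h' l j|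
          ≤ (cout Gn l * |Wpow W h i l|) * 1 :=
            mul_le_mul_of_nonneg_left e3 (mul_nonneg (cout_nonneg Gn l) (abs_nonneg _))
        _ = cout Gn l * |Wpow W h i l| := mul_one _
    · refine summable_of_fin_supp ((Wpow_fin K h i).subset ?_)
      intro l hl
      simp only [Function.mem_support] at hl
      simp only [Set.mem_setOf_eq]
      intro hz
      refine hl (Finset.sum_eq_zero (fun j _ => ?_))
      rw [hz, abs_zero, zero_mul, mul_zero]
  have b2 : T ≤ (h' : ℝ) * (boundary W Gn : ℝ) := by
    rw [hT, Finset.sum_comm]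
    refine le_trans (Finset.sum_le_sum (fun j (hj : j ∈ Gn) => ?_)) (cross_bound K Gn h')
    have e1 : ∑ i ∈ Gn, ∑' l, cout Gn l * (|Wpow W h i l| * |Wpow W h' l j|)
        = ∑' l, ∑ i ∈ Gn, cout Gn l * (|Wpow W h i l| * |Wpow W h' l j|) :=
      (Summable.tsum_finsetSum (fun i _ => summable_cWW K Gn h h' i j)).symm
    rw [e1]
    have e4 : ∀ l, cout Gn l * |Wpow W h' j l| = cout Gn l * |Wpow W h' l j| := by
      intro l; rw [Wpow_symm K h' j l]
    rw [tsum_congr e4]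
    refine Summable.tsum_le_tsum (fun l => ?_) ?_ ?_
    · have e2 : ∑ i ∈ Gn, cout Gn l * (|Wpow W h i l| * |Wpow W h' l j|)
          = (cout Gn l * |Wpow W h' l j|) * ∑ i ∈ Gn, |Wpow W h i l| := by
        rw [Finset.mul_sum]
        exact Finset.sum_congr rfl (fun i _ => by ring)
      rw [e2]
      calc (cout Gn l * |Wpow W h' l j|) * ∑ i ∈ Gn, |Wpow W h i l|
          ≤ (cout Gn l * |Wpow W h' l j|) * 1 :=
            mul_le_mul_of_nonneg_left (col_bound K Gn h l)
              (mul_nonneg (cout_nonneg Gn l) (abs_nonneg _))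
        _ = cout Gn l * |Wpow W h' l j| := mul_one _
    · refine summable_of_fin_supp (((Wpow_fin K h' j).subset ?_))
      intro l hl
      simp only [Function.mem_support] at hl
      simp only [Set.mem_setOf_eq]
      intro hz
      refine hl (Finset.sum_eq_zero (fun i _ => ?_))
      have : Wpow W h' l j = 0 := by rw [Wpow_symm K h' l j, hz]
      rw [this, abs_zero, mul_zero, mul_zero]
    · refine summable_of_fin_supp ((Wpow_fin K h' j).subset ?_)
      intro l hl
      simp only [Function.mem_support] at hl
      simp only [Set.mem_setOf_eq]
      intro hz
      have hz2 : Wpow W h' l j = 0 := by rw [Wpow_symm K h' l j, hz]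
      exact hl (by rw [hz2, abs_zero, mul_zero])
  have hmin : T ≤ (((h:ℝ) + (h':ℝ)) / 2) * (boundary W Gn : ℝ) := by
    linarith [b1, b2]
  refine le_trans hmin ?_
  refine mul_le_mul_of_nonneg_right ?_ (Nat.cast_nonneg _)
  have : (h:ℝ) + (h':ℝ) ≤ ((h:ℝ) + 1) * ((h':ℝ) + 1) := by
    nlinarith [mul_nonneg (Nat.cast_nonneg (α := ℝ) h) (Nat.cast_nonneg (α := ℝ) h')]
  linarith

lemma T2_nonneg (Gn : Finset G) (h h' : ℕ) :
    0 ≤ ∑ i ∈ Gn, ∑ j ∈ Gn, ∑' l, cout Gn l * (|Wpow W h i l| * |Wpow W h' l j|) :=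
  Finset.sum_nonneg (fun i _ => Finset.sum_nonneg (fun j _ => tsum_nonneg (fun l =>
    mul_nonneg (cout_nonneg Gn l) (mul_nonneg (abs_nonneg _) (abs_nonneg _)))))

end Stmt0Aux

namespace Stmt0Aux

variable {W : G → G → ℝ}

lemma norm_summable_of_nonneg {u : ℕ → ℝ} (h0 : ∀ n, 0 ≤ u n) (h : Summable u) :
    Summable fun n => ‖u n‖ := by
  have e : (fun n => ‖u n‖) = u := funext fun n => by
    rw [Real.norm_eq_abs, abs_of_nonneg (h0 n)]
  rw [e]; exact h

lemma sum_coe2 (Gn : Finset G) (F : G → G → ℝ) :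
    ∑ i : Gn, ∑ j : Gn, F i j = ∑ i ∈ Gn, ∑ j ∈ Gn, F i j := by
  rw [← Finset.sum_coe_sort Gn (fun i => ∑ j ∈ Gn, F i j)]
  exact Finset.sum_congr rfl (fun i _ => Finset.sum_coe_sort Gn (F i))

lemma summable_cKK (K : Ker W) (Gn : Finset G) {f p : ℕ → ℝ}
    (hf : Summable fun n => |f n|) (hp : Summable fun n => |p n|) (i j : G) :
    Summable fun l => cout Gn l * (|Kmat W f i l| * |Kmat W p l j|) := by
  refine Summable.of_nonneg_of_le
    (fun l => mul_nonneg (cout_nonneg _ _) (mul_nonneg (abs_nonneg _) (abs_nonneg _)))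
    (fun l => ?_) ((KA_summable K hf i).mul_right (polNorm p))
  calc cout Gn l * (|Kmat W f i l| * |Kmat W p l j|)
      ≤ 1 * (KA W f i l * polNorm p) := by
        refine mul_le_mul (cout_le_one _ _) ?_
          (mul_nonneg (abs_nonneg _) (abs_nonneg _)) zero_le_one
        refine mul_le_mul (Kmat_abs_le_KA K hf i l)
          (le_trans (Kmat_abs_le_KA K hp l j) (KA_le_pol K hp l j)) (abs_nonneg _)
          (KA_nonneg W f i l)
    _ = KA W f i l * polNorm p := one_mul _

lemma summable_cKAKA (K : Ker W) (Gn : Finset G) {f p : ℕ → ℝ}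
    (hf : Summable fun n => |f n|) (hp : Summable fun n => |p n|) (i j : G) :
    Summable fun l => cout Gn l * (KA W f i l * KA W p l j) := by
  refine Summable.of_nonneg_of_le
    (fun l => mul_nonneg (cout_nonneg _ _) (mul_nonneg (KA_nonneg _ _ _ _) (KA_nonneg _ _ _ _)))
    (fun l => ?_) ((KA_summable K hf i).mul_right (polNorm p))
  calc cout Gn l * (KA W f i l * KA W p l j)
      ≤ 1 * (KA W f i l * polNorm p) := by
        refine mul_le_mul (cout_le_one _ _) ?_
          (mul_nonneg (KA_nonneg _ _ _ _) (KA_nonneg _ _ _ _)) zero_le_one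
        exact mul_le_mul_of_nonneg_left (KA_le_pol K hp l j) (KA_nonneg _ _ _ _)
    _ = KA W f i l * polNorm p := one_mul _

lemma entry_bound (K : Ker W) (Gn : Finset G) {f p : ℕ → ℝ}
    (hf : Summable fun n => |f n|) (hp : Summable fun n => |p n|) (i j : Gn) :
    |(Kn W f Gn * Kn W p Gn - Kn W (cauchy f p) Gn) i j|
      ≤ ∑' l, cout Gn l * (|Kmat W f (i : G) l| * |Kmat W p l (j : G)|) := by
  rw [Matrix.sub_apply, Kn_mul_diff K hf hp Gn i j, abs_neg]
  have e : (fun l => |cout Gn l * (Kmat W f (i:G) l * Kmat W p l (j:G))|)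
      = fun l => cout Gn l * (|Kmat W f (i:G) l| * |Kmat W p l (j:G)|) := by
    funext l
    rw [abs_mul, abs_of_nonneg (cout_nonneg Gn l), abs_mul]
  refine le_trans (abs_tsum_le ?_) (le_of_eq (by rw [e]))
  rw [e]
  exact summable_cKK K Gn hf hp (i : G) (j : G)

lemma core_bound (K : Ker W) (Gn : Finset G) {f p : ℕ → ℝ}
    (hf : Summable fun n => |f n| * (n + 1 : ℝ)) (hp : Summable fun n => |p n| * (n + 1 : ℝ)) :
    ∑ i : Gn, ∑ j : Gn, |(Kn W f Gn * Kn W p Gn - Kn W (cauchy f p) Gn) i j|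
      ≤ 1 / 2 * (boundary W Gn : ℝ) * (regFactor f * regFactor p) := by
  have hf' : Summable fun n => |f n| := summable_abs_of_weighted hf
  have hp' : Summable fun n => |p n| := summable_abs_of_weighted hp
  have hfp : Summable fun q : ℕ × ℕ => |f q.1| * |p q.2| :=
    summable_mul_of_summable_norm (f := fun n => |f n|) (g := fun n => |p n|)
      (by simpa using hf') (by simpa using hp')
  -- step 1 : entrywise bound
  have step1 : ∑ i : Gn, ∑ j : Gn, |(Kn W f Gn * Kn W p Gn - Kn W (cauchy f p) Gn) i j|
      ≤ ∑ i ∈ Gn, ∑ j ∈ Gn, ∑' l, cout Gn l * (|Kmat W f i l| * |Kmat W p l j|) := by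
    rw [← sum_coe2 Gn (fun i j => ∑' l, cout Gn l * (|Kmat W f i l| * |Kmat W p l j|))]
    exact Finset.sum_le_sum (fun i _ => Finset.sum_le_sum (fun j _ => entry_bound K Gn hf' hp' i j))
  -- step 2 : replace Kmat by KA
  have step2 : ∑ i ∈ Gn, ∑ j ∈ Gn, ∑' l, cout Gn l * (|Kmat W f i l| * |Kmat W p l j|)
      ≤ ∑ i ∈ Gn, ∑ j ∈ Gn, ∑' l, cout Gn l * (KA W f i l * KA W p l j) := by
    refine Finset.sum_le_sum (fun i _ => Finset.sum_le_sum (fun j _ => ?_))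
    refine Summable.tsum_le_tsum (fun l => ?_) (summable_cKK K Gn hf' hp' i j)
      (summable_cKAKA K Gn hf' hp' i j)
    refine mul_le_mul_of_nonneg_left ?_ (cout_nonneg Gn l)
    exact mul_le_mul (Kmat_abs_le_KA K hf' i l) (Kmat_abs_le_KA K hp' l j)
      (abs_nonneg _) (KA_nonneg _ _ _ _)
  -- claim 1 : per (i,j), expand to a tsum over ℕ × ℕ
  have claim1 : ∀ i j : G, ∑' l, cout Gn l * (KA W f i l * KA W p l j)
      = ∑' q : ℕ × ℕ, (|f q.1| * |p q.2|)
          * ∑' l, cout Gn l * (|Wpow W q.1 i l| * |Wpow W q.2 l j|) := by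
    intro i j
    have stepa : ∀ l, KA W f i l * KA W p l j
        = ∑' q : ℕ × ℕ, (|f q.1| * |Wpow W q.1 i l|) * (|p q.2| * |Wpow W q.2 l j|) := by
      intro l
      refine Summable.tsum_mul_tsum (summable_abs_fW K hf' i l) (summable_abs_fW K hp' l j) ?_
      exact summable_mul_of_summable_norm
        (f := fun n => |f n| * |Wpow W n i l|) (g := fun n => |p n| * |Wpow W n l j|)
        (norm_summable_of_nonneg (fun n => mul_nonneg (abs_nonneg _) (abs_nonneg _))
          (summable_abs_fW K hf' i l))
        (norm_summable_of_nonneg (fun n => mul_nonneg (abs_nonneg _) (abs_nonneg _))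
          (summable_abs_fW K hp' l j))
    have stepb : ∀ l, cout Gn l * (KA W f i l * KA W p l j)
        = ∑' q : ℕ × ℕ, cout Gn l
            * ((|f q.1| * |Wpow W q.1 i l|) * (|p q.2| * |Wpow W q.2 l j|)) := by
      intro l
      rw [stepa l, tsum_mul_left]
    -- global summability on (ℕ×ℕ) × G
    have hmargb : ∀ q : ℕ × ℕ, ∀ l, cout Gn l
        * ((|f q.1| * |Wpow W q.1 i l|) * (|p q.2| * |Wpow W q.2 l j|))
        ≤ (|f q.1| * |p q.2|) * |Wpow W q.1 i l| := by
      intro q l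
      have e : cout Gn l * ((|f q.1| * |Wpow W q.1 i l|) * (|p q.2| * |Wpow W q.2 l j|))
          = (|f q.1| * |p q.2|) * (cout Gn l * (|Wpow W q.1 i l| * |Wpow W q.2 l j|)) := by
        ring
      rw [e]
      refine mul_le_mul_of_nonneg_left ?_ (mul_nonneg (abs_nonneg _) (abs_nonneg _))
      calc cout Gn l * (|Wpow W q.1 i l| * |Wpow W q.2 l j|)
          ≤ 1 * (|Wpow W q.1 i l| * 1) := by
            refine mul_le_mul (cout_le_one _ _)
              (mul_le_mul_of_nonneg_left (Wpow_abs_le_one K q.2 l j) (abs_nonneg _))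
              (mul_nonneg (abs_nonneg _) (abs_nonneg _)) zero_le_one
        _ = |Wpow W q.1 i l| := by ring
    have hfib : ∀ q : ℕ × ℕ, Summable fun l => cout Gn l
        * ((|f q.1| * |Wpow W q.1 i l|) * (|p q.2| * |Wpow W q.2 l j|)) := by
      intro q
      refine summable_of_fin_supp ((Wpow_fin K q.1 i).subset ?_)
      intro l hl
      simp only [Function.mem_support] at hl
      simp only [Set.mem_setOf_eq]
      intro hz; exact hl (by rw [hz, abs_zero, mul_zero, zero_mul, mul_zero])
    have hglob : Summable (fun pr : (ℕ × ℕ) × G => cout Gn pr.2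
        * ((|f pr.1.1| * |Wpow W pr.1.1 i pr.2|) * (|p pr.1.2| * |Wpow W pr.1.2 pr.2 j|))) := by
      rw [summable_prod_of_nonneg (fun pr => mul_nonneg (cout_nonneg _ _)
        (mul_nonneg (mul_nonneg (abs_nonneg _) (abs_nonneg _))
          (mul_nonneg (abs_nonneg _) (abs_nonneg _))))]
      refine ⟨fun q => hfib q, ?_⟩
      refine Summable.of_nonneg_of_le (fun q => tsum_nonneg (fun l =>
        mul_nonneg (cout_nonneg _ _) (mul_nonneg (mul_nonneg (abs_nonneg _) (abs_nonneg _))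
          (mul_nonneg (abs_nonneg _) (abs_nonneg _))))) (fun q => ?_) hfp
      refine le_trans (Summable.tsum_le_tsum (hmargb q) (hfib q)
        ((Wpow_abs_summable K q.1 i).mul_left _)) ?_
      rw [tsum_mul_left]
      exact mul_le_of_le_one_right (mul_nonneg (abs_nonneg _) (abs_nonneg _))
        (Wpow_row K q.1 i)
    have hswap : ∑' l, ∑' q : ℕ × ℕ, cout Gn l
        * ((|f q.1| * |Wpow W q.1 i l|) * (|p q.2| * |Wpow W q.2 l j|))
        = ∑' q : ℕ × ℕ, ∑' l, cout Gn l
            * ((|f q.1| * |Wpow W q.1 i l|) * (|p q.2| * |Wpow W q.2 l j|)) := by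
      refine tsum_tsum_comm_of_summable ?_
      simpa using hglob.prod_symm
    have stepd : ∀ q : ℕ × ℕ, ∑' l, cout Gn l
        * ((|f q.1| * |Wpow W q.1 i l|) * (|p q.2| * |Wpow W q.2 l j|))
        = (|f q.1| * |p q.2|) * ∑' l, cout Gn l * (|Wpow W q.1 i l| * |Wpow W q.2 l j|) := by
      intro q
      rw [← tsum_mul_left]
      refine tsum_congr (fun l => ?_)
      ring
    rw [tsum_congr stepb, hswap]
    exact tsum_congr stepd
  -- step 3 : swap the finite double sum with the tsum over q
  have hYsummable : ∀ z : G × G, Summable fun q : ℕ × ℕ => (|f q.1| * |p q.2|)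
      * ∑' l, cout Gn l * (|Wpow W q.1 z.1 l| * |Wpow W q.2 l z.2|) := by
    intro z
    refine Summable.of_nonneg_of_le (fun q => mul_nonneg
      (mul_nonneg (abs_nonneg _) (abs_nonneg _)) (tsum_nonneg (fun l =>
        mul_nonneg (cout_nonneg _ _) (mul_nonneg (abs_nonneg _) (abs_nonneg _)))))
      (fun q => ?_) hfp
    exact mul_le_of_le_one_right (mul_nonneg (abs_nonneg _) (abs_nonneg _))
      (tsum_cWW_le_one K Gn q.1 q.2 z.1 z.2)
  have step3 : ∑ i ∈ Gn, ∑ j ∈ Gn, ∑' l, cout Gn l * (KA W f i l * KA W p l j)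
      = ∑' q : ℕ × ℕ, (|f q.1| * |p q.2|)
          * ∑ i ∈ Gn, ∑ j ∈ Gn, ∑' l, cout Gn l * (|Wpow W q.1 i l| * |Wpow W q.2 l j|) := by
    have e1 : ∑ i ∈ Gn, ∑ j ∈ Gn, ∑' l, cout Gn l * (KA W f i l * KA W p l j)
        = ∑ z ∈ Gn ×ˢ Gn, ∑' q : ℕ × ℕ, (|f q.1| * |p q.2|)
            * ∑' l, cout Gn l * (|Wpow W q.1 z.1 l| * |Wpow W q.2 l z.2|) := by
      rw [Finset.sum_product]
      exact Finset.sum_congr rfl (fun i _ => Finset.sum_congr rfl (fun j _ => claim1 i j))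
    rw [e1, ← Summable.tsum_finsetSum (fun z _ => hYsummable z)]
    refine tsum_congr (fun q => ?_)
    rw [Finset.sum_product' (f := fun i j => (|f q.1| * |p q.2|)
      * ∑' l, cout Gn l * (|Wpow W q.1 i l| * |Wpow W q.2 l j|))]
    simp only [← Finset.mul_sum]
  -- step 4 : final estimate
  have step4 : ∑' q : ℕ × ℕ, (|f q.1| * |p q.2|)
      * ∑ i ∈ Gn, ∑ j ∈ Gn, ∑' l, cout Gn l * (|Wpow W q.1 i l| * |Wpow W q.2 l j|)
      ≤ 1 / 2 * (boundary W Gn : ℝ) * (regFactor f * regFactor p) := by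
    have hRHSsum : Summable fun q : ℕ × ℕ => (boundary W Gn : ℝ) / 2
        * ((|f q.1| * (q.1 + 1 : ℝ)) * (|p q.2| * (q.2 + 1 : ℝ))) :=
      (summable_prod_weighted hf hp).mul_left _
    have hLHSsum : Summable fun q : ℕ × ℕ => (|f q.1| * |p q.2|)
        * ∑ i ∈ Gn, ∑ j ∈ Gn, ∑' l, cout Gn l * (|Wpow W q.1 i l| * |Wpow W q.2 l j|) := by
      have e : (fun q : ℕ × ℕ => (|f q.1| * |p q.2|)
          * ∑ i ∈ Gn, ∑ j ∈ Gn, ∑' l, cout Gn l * (|Wpow W q.1 i l| * |Wpow W q.2 l j|))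
          = fun q : ℕ × ℕ => ∑ z ∈ Gn ×ˢ Gn, (|f q.1| * |p q.2|)
              * ∑' l, cout Gn l * (|Wpow W q.1 z.1 l| * |Wpow W q.2 l z.2|) := by
        funext q
        rw [Finset.sum_product' (f := fun i j => (|f q.1| * |p q.2|)
          * ∑' l, cout Gn l * (|Wpow W q.1 i l| * |Wpow W q.2 l j|))]
        simp only [← Finset.mul_sum]
      rw [e]
      exact summable_sum (fun z _ => hYsummable z)
    have hpt : ∀ q : ℕ × ℕ, (|f q.1| * |p q.2|)
        * ∑ i ∈ Gn, ∑ j ∈ Gn, ∑' l, cout Gn l * (|Wpow W q.1 i l| * |Wpow W q.2 l j|)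
        ≤ (boundary W Gn : ℝ) / 2 * ((|f q.1| * (q.1 + 1 : ℝ)) * (|p q.2| * (q.2 + 1 : ℝ))) := by
      intro q
      have h1 := T2_le K Gn q.1 q.2
      calc (|f q.1| * |p q.2|)
          * ∑ i ∈ Gn, ∑ j ∈ Gn, ∑' l, cout Gn l * (|Wpow W q.1 i l| * |Wpow W q.2 l j|)
          ≤ (|f q.1| * |p q.2|)
            * ((((q.1:ℝ) + 1) * ((q.2:ℝ) + 1)) / 2 * (boundary W Gn : ℝ)) :=
            mul_le_mul_of_nonneg_left h1 (mul_nonneg (abs_nonneg _) (abs_nonneg _))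
        _ = (boundary W Gn : ℝ) / 2 * ((|f q.1| * (q.1 + 1 : ℝ)) * (|p q.2| * (q.2 + 1 : ℝ))) := by
            ring
    refine le_trans (Summable.tsum_le_tsum hpt hLHSsum hRHSsum) (le_of_eq ?_)
    rw [tsum_mul_left]
    rw [← Summable.tsum_mul_tsum (f := fun n => |f n| * (n + 1 : ℝ)) (g := fun n => |p n| * (n + 1 : ℝ))
      hf hp (summable_prod_weighted hf hp)]
    show (boundary W Gn : ℝ) / 2 * (regFactor f * regFactor p) = _
    ring
  exact le_trans step1 (le_trans step2 (le_of_eq step3 |>.trans step4))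

end Stmt0Aux

namespace Stmt0Aux

variable {W : G → G → ℝ}

lemma ker_of_hyp {D : ℕ} (hD : 0 < D) (h : KernelHyp W D) : Ker W := by
  obtain ⟨hsym, hfin, hcard, hbdd⟩ := h
  refine ⟨hsym, hfin, fun i => ?_⟩
  have hsupp : ∀ j ∉ (hfin i).toFinset, |W i j| = 0 := by
    intro j hj
    rw [Set.Finite.mem_toFinset] at hj
    simp only [Set.mem_setOf_eq, not_not] at hj
    rw [hj, abs_zero]
  rw [tsum_eq_sum hsupp]
  have hcard' : ((hfin i).toFinset.card : ℝ) ≤ (D : ℝ) := by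
    have := hcard i
    rw [Set.ncard_eq_toFinset_card _ (hfin i)] at this
    exact_mod_cast this
  have hDpos : (0:ℝ) < (D : ℝ) := by exact_mod_cast hD
  calc ∑ j ∈ (hfin i).toFinset, |W i j|
      ≤ ∑ j ∈ (hfin i).toFinset, 1 / (D : ℝ) :=
        Finset.sum_le_sum (fun j _ => hbdd i j)
    _ = ((hfin i).toFinset.card : ℝ) * (1 / (D : ℝ)) := by
        rw [Finset.sum_const, nsmul_eq_mul]
    _ ≤ (D : ℝ) * (1 / (D : ℝ)) :=
        mul_le_mul_of_nonneg_right hcard' (by positivity)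
    _ = 1 := by field_simp

lemma main_list (K : Ker W) (Gn : Finset G) :
    ∀ (fs : List (ℕ → ℝ)), fs ≠ [] →
      (∀ f ∈ fs, Summable fun n => |f n| * (n + 1 : ℝ)) →
      ∑ i : Gn, ∑ j : Gn, |((fs.map (fun f => Kn W f Gn)).prod
          - Kn W (fs.foldr cauchy cauchyOne) Gn) i j|
        ≤ ((fs.length : ℝ) - 1) / 2 * (boundary W Gn : ℝ) * (fs.map regFactor).prod := by
  intro fs
  induction fs with
  | nil => intro h; exact absurd rfl h
  | cons f rest ih =>
    intro _ hfs
    have hf : Summable fun n => |f n| * (n + 1 : ℝ) := hfs f (List.mem_cons_self)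
    have hf' : Summable fun n => |f n| := summable_abs_of_weighted hf
    cases rest with
    | nil =>
      rw [List.map_cons, List.map_nil, List.prod_cons, List.prod_nil, mul_one,
        List.foldr_cons, List.foldr_nil, cauchy_one_right, sub_self]
      have hz : ∀ i j : Gn, |(0 : Matrix Gn Gn ℝ) i j| = 0 := by
        intro i j; rw [Matrix.zero_apply, abs_zero]
      rw [Finset.sum_congr rfl (fun i _ => Finset.sum_congr rfl (fun j _ => hz i j))]
      simp only [Finset.sum_const_zero]
      have : ((List.length [f] : ℝ) - 1) = 0 := by norm_num
      rw [this]
      norm_num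
    | cons r rest' =>
      set rest := r :: rest' with hrest
      have hrestne : rest ≠ [] := by simp [hrest]
      have hrestw : ∀ q ∈ rest, Summable fun n => |q n| * (n + 1 : ℝ) :=
        fun q hq => hfs q (List.mem_cons_of_mem f hq)
      have hrest' : ∀ q ∈ rest, Summable fun n => |q n| :=
        fun q hq => summable_abs_of_weighted (hrestw q hq)
      set A := Kn W f Gn
      set P := (rest.map (fun q => Kn W q Gn)).prod with hP
      set qs := rest.foldr cauchy cauchyOne with hqs
      set Q := Kn W qs Gn with hQ
      have hqw : Summable fun n => |qs n| * (n + 1 : ℝ) := (foldr_weighted rest hrestw).1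
      have hqreg : regFactor qs ≤ (rest.map regFactor).prod := (foldr_weighted rest hrestw).2
      have hmatrix : ((f :: rest).map (fun q => Kn W q Gn)).prod
          - Kn W ((f :: rest).foldr cauchy cauchyOne) Gn
          = A * (P - Q) + (A * Q - Kn W (cauchy f qs) Gn) := by
        rw [List.map_cons, List.prod_cons, List.foldr_cons, ← hqs, ← hP]
        rw [mul_sub]
        abel
      rw [hmatrix]
      -- triangle inequality
      have htri : ∑ i : Gn, ∑ j : Gn,
          |(A * (P - Q) + (A * Q - Kn W (cauchy f qs) Gn)) i j|
          ≤ (∑ i : Gn, ∑ j : Gn, |(A * (P - Q)) i j|)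
            + ∑ i : Gn, ∑ j : Gn, |(A * Q - Kn W (cauchy f qs) Gn) i j| := by
        rw [← Finset.sum_add_distrib]
        refine Finset.sum_le_sum (fun i _ => ?_)
        rw [← Finset.sum_add_distrib]
        refine Finset.sum_le_sum (fun j _ => ?_)
        rw [Matrix.add_apply]
        exact abs_add_le _ _
      refine le_trans htri ?_
      -- first piece
      have hb1 : ∑ i : Gn, ∑ j : Gn, |(A * (P - Q)) i j|
          ≤ polNorm f * ∑ i : Gn, ∑ j : Gn, |(P - Q) i j| :=
        absSum_mul_le A (P - Q) (colKn K hf' Gn)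
      have hIH := ih hrestne hrestw
      -- second piece
      have hb2 : ∑ i : Gn, ∑ j : Gn, |(A * Q - Kn W (cauchy f qs) Gn) i j|
          ≤ 1 / 2 * (boundary W Gn : ℝ) * (regFactor f * regFactor qs) :=
        core_bound K Gn hf hqw
      -- arithmetic
      have hS1nn : (0:ℝ) ≤ ∑ i : Gn, ∑ j : Gn, |(P - Q) i j| :=
        Finset.sum_nonneg (fun i _ => Finset.sum_nonneg (fun j _ => abs_nonneg _))
      have hpolle : polNorm f ≤ regFactor f := polNorm_le_reg hf
      have hpolnn : 0 ≤ polNorm f := polNorm_nonneg f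
      have hregnn : 0 ≤ regFactor f := regFactor_nonneg f
      have hqregnn : 0 ≤ regFactor qs := regFactor_nonneg qs
      have hRnn : 0 ≤ (rest.map regFactor).prod := prod_map_regFactor_nonneg rest
      have hdnn : (0:ℝ) ≤ (boundary W Gn : ℝ) := Nat.cast_nonneg _
      have hlen : (1:ℝ) ≤ (rest.length : ℝ) := by
        have : 1 ≤ rest.length := by rw [hrest]; simp
        exact_mod_cast this
      have hlencast : ((f :: rest).length : ℝ) = (rest.length : ℝ) + 1 := by
        rw [List.length_cons]
        push_cast
        ring
      have hprodcast : ((f :: rest).map regFactor).prod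
          = regFactor f * (rest.map regFactor).prod := by
        rw [List.map_cons, List.prod_cons]
      rw [hlencast, hprodcast]
      set n : ℝ := (rest.length : ℝ)
      set d : ℝ := (boundary W Gn : ℝ)
      set R : ℝ := (rest.map regFactor).prod
      set S1 : ℝ := ∑ i : Gn, ∑ j : Gn, |(P - Q) i j|
      -- goal: sum1 + sum2 ≤ (n+1-1)/2 * d * (regFactor f * R)
      have step1 : ∑ i : Gn, ∑ j : Gn, |(A * (P - Q)) i j|
          ≤ regFactor f * ((n - 1) / 2 * d * R) := by
        refine le_trans hb1 ?_
        have h1 : polNorm f * S1 ≤ regFactor f * S1 :=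
          mul_le_mul_of_nonneg_right hpolle hS1nn
        have h2 : regFactor f * S1 ≤ regFactor f * ((n - 1) / 2 * d * R) :=
          mul_le_mul_of_nonneg_left hIH hregnn
        exact le_trans h1 h2
      have step2 : ∑ i : Gn, ∑ j : Gn, |(A * Q - Kn W (cauchy f qs) Gn) i j|
          ≤ 1 / 2 * d * (regFactor f * R) := by
        refine le_trans hb2 ?_
        have : regFactor f * regFactor qs ≤ regFactor f * R :=
          mul_le_mul_of_nonneg_left hqreg hregnn
        have hd2 : (0:ℝ) ≤ 1 / 2 * d := by positivity
        calc 1 / 2 * d * (regFactor f * regFactor qs)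
            ≤ 1 / 2 * d * (regFactor f * R) := mul_le_mul_of_nonneg_left this hd2
          _ = 1 / 2 * d * (regFactor f * R) := rfl
      refine le_trans (add_le_add step1 step2) (le_of_eq ?_)
      ring

theorem stmt0' {G : Type*} [Countable G] (W : G → G → ℝ) (D : ℕ) (hD : 0 < D)
    (hker : KernelHyp W D)
    (k : ℕ) (hk : 2 ≤ k) (g : Fin k → ℕ → ℝ)
    (hg : ∀ i, Summable (fun h => |g i h| * (h + 1 : ℝ)))
    (Gn : Finset G) (hδ : 0 < boundary W Gn) :
    blockNorm W Gn
        ((List.ofFn fun i => Kn W (g i) Gn).prod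
          - Kn W ((List.ofFn g).foldr cauchy cauchyOne) Gn)
      ≤ ((k : ℝ) - 1) / 2 * ∏ i, regFactor (g i) := by
  have K : Ker W := ker_of_hyp hD hker
  set fs : List (ℕ → ℝ) := List.ofFn g with hfs
  have hmapKn : (List.ofFn fun i => Kn W (g i) Gn) = fs.map (fun f => Kn W f Gn) := by
    rw [hfs, List.map_ofFn]
    rfl
  have hne : fs ≠ [] := by
    intro hnil
    have : fs.length = 0 := by rw [hnil]; rfl
    rw [hfs, List.length_ofFn] at this
    omega
  have hmem : ∀ f ∈ fs, Summable fun n => |f n| * (n + 1 : ℝ) := by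
    intro f hfmem
    rw [hfs, List.mem_ofFn] at hfmem
    obtain ⟨i, hi⟩ := hfmem
    rw [← hi]
    exact hg i
  have hlen : (fs.length : ℝ) = (k : ℝ) := by rw [hfs, List.length_ofFn]
  have hprod : (fs.map regFactor).prod = ∏ i, regFactor (g i) := by
    rw [hfs, List.map_ofFn]
    exact List.prod_ofFn
  have hmain := main_list K Gn fs hne hmem
  rw [hlen, hprod] at hmain
  rw [blockNorm, hmapKn]
  have hδpos : (0:ℝ) < (boundary W Gn : ℝ) := by exact_mod_cast hδ
  calc (1 / (boundary W Gn : ℝ)) * ∑ i, ∑ j,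
        |(( fs.map (fun f => Kn W f Gn)).prod - Kn W (fs.foldr cauchy cauchyOne) Gn) i j|
      ≤ (1 / (boundary W Gn : ℝ)) * (((k : ℝ) - 1) / 2 * (boundary W Gn : ℝ)
          * ∏ i, regFactor (g i)) := by
        refine mul_le_mul_of_nonneg_left hmain (by positivity)
    _ = ((k : ℝ) - 1) / 2 * ∏ i, regFactor (g i) := by
        field_simp

end Stmt0Aux

/-- Asymptotic homomorphism, Szegö-type lemma.
For `k ≥ 2` power series `g 0, …, g (k-1)` with finite regularity factors,
`b_n(K_n(g_1)⋯K_n(g_k) − K_n(g_1⋯g_k)) ≤ ((k−1)/2)·α(g_1)⋯α(g_k)`. -/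
theorem stmt0 {G : Type*} [Countable G] (W : G → G → ℝ) (D : ℕ) (hD : 0 < D)
    (hker : KernelHyp W D)
    (k : ℕ) (hk : 2 ≤ k) (g : Fin k → ℕ → ℝ)
    (hg : ∀ i, Summable (fun h => |g i h| * (h + 1 : ℝ)))
    (Gn : Finset G) (hδ : 0 < boundary W Gn) :
    blockNorm W Gn
        ((List.ofFn fun i => Kn W (g i) Gn).prod
          - Kn W ((List.ofFn g).foldr cauchy cauchyOne) Gn)
      ≤ ((k : ℝ) - 1) / 2 * ∏ i, regFactor (g i) :=
  Stmt0Aux.stmt0' W D hD hker k hk g hg Gn hδ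

end
end

section
/- Let f and g be real power series with ‖f‖_{1,pol} < ∞ and α(g) < ∞. Then for every finite subset G_n ⊆ G with δ_n > 0, one has b_n(K_n(f)·K_n(g) − K_n(f·g)) ≤ ‖f‖_{1,pol} · α(g), where f·g denotes the Cauchy product of the power series. -/
open scoped BigOperators Classical
open MeasureTheory Filter ProbabilityTheory

noncomputable section

variable {G : Type*}

namespace Stmt1Aux

lemma summable_of_finsupp {ι : Type*} {F : ι → ℝ} (h : ({x | F x ≠ 0} : Set ι).Finite) :
    Summable F := by
  apply summable_of_ne_finset_zero (s := h.toFinset)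
  intro b hb
  by_contra hb'
  exact hb (h.mem_toFinset.2 hb')

lemma tsum_zero_of_all_zero {ι : Type*} {F : ι → ℝ} (h : ∀ x, F x = 0) : ∑' x, F x = 0 := by
  rw [tsum_congr h, tsum_zero]

variable {W : G → G → ℝ} {D : ℕ}

lemma rowsupp_fin (hfin : ∀ i, ({j | W i j ≠ 0} : Set G).Finite)
    (h : ℕ) (i : G) : ({j | Wpow W h i j ≠ 0} : Set G).Finite := by
  induction h generalizing i with
  | zero =>
    apply (Set.finite_singleton i).subset
    intro j hj
    simp only [Set.mem_setOf_eq, Wpow] at hj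
    rw [Set.mem_singleton_iff]
    by_contra hij
    exact hj (if_neg (fun e => hij e.symm))
  | succ h ih =>
    apply Set.Finite.subset ((hfin i).biUnion (fun k _ => ih k))
    intro j hj
    simp only [Set.mem_setOf_eq, Wpow] at hj
    by_contra hc
    apply hj
    apply tsum_zero_of_all_zero
    intro k
    by_cases hk : W i k = 0
    · simp [hk]
    · have : Wpow W h k j = 0 := by
        by_contra hk2
        exact hc (Set.mem_biUnion hk hk2)
      simp [this]

lemma summable_abs_W (hfin : ∀ i, ({j | W i j ≠ 0} : Set G).Finite) (i : G) :
    Summable (fun k => |W i k|) :=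
  summable_of_finsupp ((hfin i).subset (fun k hk => abs_ne_zero.mp hk))

lemma summable_abs_rowpow (hfin : ∀ i, ({j | W i j ≠ 0} : Set G).Finite) (h : ℕ) (i : G) :
    Summable (fun j => |Wpow W h i j|) :=
  summable_of_finsupp ((rowsupp_fin hfin h i).subset (fun j hj => abs_ne_zero.mp hj))

lemma rowsum_W_le (hfin : ∀ i, ({j | W i j ≠ 0} : Set G).Finite)
    (hcard : ∀ i, ({j | W i j ≠ 0} : Set G).ncard ≤ D)
    (hbd : ∀ i j, |W i j| ≤ 1 / (D : ℝ)) (hD : 0 < D) (i : G) :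
    ∑' k, |W i k| ≤ 1 := by
  have h0 : ∀ k ∉ (hfin i).toFinset, |W i k| = 0 := by
    intro k hk
    simp only [Set.Finite.mem_toFinset, Set.mem_setOf_eq, not_not] at hk
    simp [hk]
  rw [tsum_eq_sum h0]
  have hc : ((hfin i).toFinset.card : ℝ) ≤ (D : ℝ) := by
    have h1 := hcard i
    rw [Set.ncard_eq_toFinset_card _ (hfin i)] at h1
    exact_mod_cast h1
  have hDR : (0:ℝ) < D := by exact_mod_cast hD
  calc ∑ k ∈ (hfin i).toFinset, |W i k|
      ≤ ∑ k ∈ (hfin i).toFinset, (1 / (D:ℝ)) := Finset.sum_le_sum fun k _ => hbd i k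
    _ = ((hfin i).toFinset.card : ℝ) * (1/(D:ℝ)) := by rw [Finset.sum_const, nsmul_eq_mul]
    _ ≤ (D:ℝ) * (1/(D:ℝ)) := mul_le_mul_of_nonneg_right hc (by positivity)
    _ = 1 := by field_simp

lemma rowsum_pow_le (hfin : ∀ i, ({j | W i j ≠ 0} : Set G).Finite)
    (hcard : ∀ i, ({j | W i j ≠ 0} : Set G).ncard ≤ D)
    (hbd : ∀ i j, |W i j| ≤ 1 / (D : ℝ)) (hD : 0 < D) :
    ∀ (h : ℕ) (i : G), ∑' j, |Wpow W h i j| ≤ 1 := by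
  intro h
  induction h with
  | zero =>
    intro i
    have e : (fun j => |Wpow W 0 i j|) = fun j => if j = i then (1:ℝ) else 0 := by
      funext j
      simp only [Wpow]
      by_cases hij : i = j
      · subst hij; simp
      · rw [if_neg hij, if_neg (fun e => hij e.symm), abs_zero]
    rw [e, tsum_ite_eq]
  | succ h ih =>
    intro i
    have hzero : ∀ j ∉ (rowsupp_fin hfin (h+1) i).toFinset, |Wpow W (h+1) i j| = 0 := by
      intro j hj
      simp only [Set.Finite.mem_toFinset, Set.mem_setOf_eq, not_not] at hj
      simp [hj]
    rw [tsum_eq_sum hzero]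
    set J := (rowsupp_fin hfin (h+1) i).toFinset with hJ
    have step1 : ∀ j, |Wpow W (h+1) i j| ≤ ∑' k, |W i k| * |Wpow W h k j| := by
      intro j
      have hs : Summable (fun k => |W i k * Wpow W h k j|) := by
        apply summable_of_finsupp ((hfin i).subset ?_)
        intro k hk
        exact left_ne_zero_of_mul (abs_ne_zero.mp hk)
      have e1 : |Wpow W (h+1) i j| = |∑' k, W i k * Wpow W h k j| := by
        simp only [Wpow]
      rw [e1]
      have hs' : Summable (fun k => ‖W i k * Wpow W h k j‖) := by
        simpa only [Real.norm_eq_abs] using hs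
      have := norm_tsum_le_tsum_norm hs'
      simpa [Real.norm_eq_abs, abs_mul] using this
    have hsummand : ∀ j ∈ J, Summable (fun k => |W i k| * |Wpow W h k j|) := by
      intro j _
      apply summable_of_finsupp ((hfin i).subset ?_)
      intro k hk
      have := left_ne_zero_of_mul hk
      exact abs_ne_zero.mp this
    calc ∑ j ∈ J, |Wpow W (h+1) i j|
        ≤ ∑ j ∈ J, ∑' k, |W i k| * |Wpow W h k j| := Finset.sum_le_sum fun j _ => step1 j
      _ = ∑' k, ∑ j ∈ J, |W i k| * |Wpow W h k j| :=
          (Summable.tsum_finsetSum (f := fun j k => |W i k| * |Wpow W h k j|) hsummand).symm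
      _ ≤ ∑' k, |W i k| := by
          apply Summable.tsum_le_tsum _ _ (summable_abs_W hfin i)
          · intro k
            rw [← Finset.mul_sum]
            by_cases hWik : W i k = 0
            · simp [hWik]
            · calc |W i k| * ∑ j ∈ J, |Wpow W h k j|
                  ≤ |W i k| * 1 := by
                    apply mul_le_mul_of_nonneg_left _ (abs_nonneg _)
                    calc ∑ j ∈ J, |Wpow W h k j| ≤ ∑' j, |Wpow W h k j| :=
                          Summable.sum_le_tsum J (fun j _ => abs_nonneg _) (summable_abs_rowpow hfin h k)
                      _ ≤ 1 := ih k
                _ = |W i k| := mul_one _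
          · apply summable_of_finsupp ((hfin i).subset ?_)
            intro k hk
            simp only [Set.mem_setOf_eq] at hk ⊢
            by_contra h0
            apply hk
            simp [h0]
      _ ≤ 1 := rowsum_W_le hfin hcard hbd hD i

lemma abs_Wpow_le_one (hfin : ∀ i, ({j | W i j ≠ 0} : Set G).Finite)
    (hcard : ∀ i, ({j | W i j ≠ 0} : Set G).ncard ≤ D)
    (hbd : ∀ i j, |W i j| ≤ 1 / (D : ℝ)) (hD : 0 < D) (h : ℕ) (i j : G) :
    |Wpow W h i j| ≤ 1 :=
  le_trans (Summable.le_tsum (summable_abs_rowpow hfin h i) j (fun _ _ => abs_nonneg _))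
    (rowsum_pow_le hfin hcard hbd hD h i)

lemma Wpow_one (i j : G) : Wpow W 1 i j = W i j := by
  show (∑' k, W i k * Wpow W 0 k j) = W i j
  rw [tsum_eq_single j ?_]
  · simp [Wpow]
  · intro k hk
    simp only [Wpow]
    rw [if_neg hk, mul_zero]

lemma Wpow_comp (hfin : ∀ i, ({j | W i j ≠ 0} : Set G).Finite) (h l : ℕ) (i j : G) :
    Wpow W (h + l) i j = ∑' k, Wpow W h i k * Wpow W l k j := by
  induction h generalizing i with
  | zero =>
    rw [Nat.zero_add]
    symm
    rw [tsum_eq_single i ?_]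
    · simp [Wpow]
    · intro k hk
      simp only [Wpow]
      rw [if_neg (fun e => hk e.symm), zero_mul]
  | succ h ih =>
    have e0 : Wpow W (h + 1 + l) i j = ∑' k, W i k * Wpow W (h + l) k j := by
      have : h + 1 + l = (h + l) + 1 := by omega
      rw [this]
      simp only [Wpow]
    rw [e0]
    have hK : ∀ k ∉ (hfin i).toFinset, W i k * Wpow W (h + l) k j = 0 := by
      intro k hk
      simp only [Set.Finite.mem_toFinset, Set.mem_setOf_eq, not_not] at hk
      rw [hk, zero_mul]
    rw [tsum_eq_sum hK]
    set K := (hfin i).toFinset with hKdef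
    have e1 : ∀ k ∈ K, W i k * Wpow W (h + l) k j
        = ∑' m, W i k * (Wpow W h k m * Wpow W l m j) := by
      intro k _
      rw [ih k, tsum_mul_left]
    rw [Finset.sum_congr rfl e1]
    have hsum1 : ∀ k ∈ K, Summable (fun m => W i k * (Wpow W h k m * Wpow W l m j)) := by
      intro k _
      apply summable_of_finsupp ((rowsupp_fin hfin h k).subset ?_)
      intro m hm
      simp only [Set.mem_setOf_eq] at hm ⊢
      exact left_ne_zero_of_mul (right_ne_zero_of_mul hm)
    rw [← Summable.tsum_finsetSum (f := fun k m => W i k * (Wpow W h k m * Wpow W l m j)) hsum1]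
    apply tsum_congr
    intro m
    have e2 : Wpow W (h+1) i m = ∑ k ∈ K, W i k * Wpow W h k m := by
      have : Wpow W (h+1) i m = ∑' k, W i k * Wpow W h k m := by simp only [Wpow]
      rw [this]
      apply tsum_eq_sum
      intro k hk
      simp only [hKdef, Set.Finite.mem_toFinset, Set.mem_setOf_eq, not_not] at hk
      rw [hk, zero_mul]
    rw [e2, Finset.sum_mul]
    apply Finset.sum_congr rfl
    intro k _
    ring

lemma Wpow_symm (hfin : ∀ i, ({j | W i j ≠ 0} : Set G).Finite)
    (hsym : ∀ i j, W i j = W j i) (h : ℕ) (i j : G) :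
    Wpow W h i j = Wpow W h j i := by
  induction h generalizing i j with
  | zero =>
    simp only [Wpow]
    by_cases e : i = j
    · subst e; rfl
    · rw [if_neg e, if_neg (fun e' => e e'.symm)]
  | succ h ih =>
    have e1 : Wpow W (h+1) i j = ∑' k, W i k * Wpow W h k j := by simp only [Wpow]
    have e2 : Wpow W (h+1) j i = ∑' k, Wpow W h j k * Wpow W 1 k i :=
      Wpow_comp hfin h 1 j i
    rw [e1, e2]
    apply tsum_congr
    intro k
    rw [Wpow_one, ih k j, hsym i k, hsym k i]
    ring

lemma summable_abs_colpow (hfin : ∀ i, ({j | W i j ≠ 0} : Set G).Finite)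
    (hsym : ∀ i j, W i j = W j i) (l : ℕ) (j : G) :
    Summable (fun k => |Wpow W l k j|) := by
  have : (fun k => |Wpow W l k j|) = fun k => |Wpow W l j k| := by
    funext k; rw [Wpow_symm hfin hsym]
  rw [this]
  exact summable_abs_rowpow hfin l j

lemma colsum_pow_le (hfin : ∀ i, ({j | W i j ≠ 0} : Set G).Finite)
    (hsym : ∀ i j, W i j = W j i)
    (hcard : ∀ i, ({j | W i j ≠ 0} : Set G).ncard ≤ D)
    (hbd : ∀ i j, |W i j| ≤ 1 / (D : ℝ)) (hD : 0 < D) (l : ℕ) (j : G) :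
    ∑' k, |Wpow W l k j| ≤ 1 := by
  have e : (∑' k, |Wpow W l k j|) = ∑' k, |Wpow W l j k| := by
    apply tsum_congr; intro k; rw [Wpow_symm hfin hsym]
  rw [e]
  exact rowsum_pow_le hfin hcard hbd hD l j

lemma summable_abs_colW (hfin : ∀ i, ({j | W i j ≠ 0} : Set G).Finite)
    (hsym : ∀ i j, W i j = W j i) (m : G) :
    Summable (fun k => |W k m|) := by
  have : (fun k => |W k m|) = fun k => |W m k| := by funext k; rw [hsym]
  rw [this]; exact summable_abs_W hfin m

lemma colsum_W_le (hfin : ∀ i, ({j | W i j ≠ 0} : Set G).Finite)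
    (hsym : ∀ i j, W i j = W j i)
    (hcard : ∀ i, ({j | W i j ≠ 0} : Set G).ncard ≤ D)
    (hbd : ∀ i j, |W i j| ≤ 1 / (D : ℝ)) (hD : 0 < D) (m : G) :
    ∑' k, |W k m| ≤ 1 := by
  have e : (∑' k, |W k m|) = ∑' k, |W m k| := by
    apply tsum_congr; intro k; rw [hsym]
  rw [e]
  exact rowsum_W_le hfin hcard hbd hD m


lemma colsupp_fin (hfin : ∀ i, ({j | W i j ≠ 0} : Set G).Finite)
    (hsym : ∀ i j, W i j = W j i) (l : ℕ) (j : G) :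
    ({m | Wpow W l m j ≠ 0} : Set G).Finite :=
  (rowsupp_fin hfin l j).subset (fun m hm => by
    simp only [Set.mem_setOf_eq] at hm ⊢
    rwa [Wpow_symm hfin hsym])

lemma summable_union_supp (hfin : ∀ i, ({j | W i j ≠ 0} : Set G).Finite)
    (hsym : ∀ i j, W i j = W j i) {S : Set G} (hS : S.Finite) {F : G → ℝ}
    (hF : ∀ k, F k ≠ 0 → ∃ m ∈ S, W k m ≠ 0) : Summable F := by
  apply summable_of_finsupp ((hS.biUnion (fun m (_ : m ∈ S) => hfin m)).subset ?_)
  intro k hk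
  obtain ⟨m, hm, hWm⟩ := hF k hk
  exact Set.mem_biUnion hm (by simpa [Set.mem_setOf_eq] using (by rwa [hsym k m] at hWm : W m k ≠ 0))

lemma cross (hfin : ∀ i, ({j | W i j ≠ 0} : Set G).Finite)
    (hsym : ∀ i j, W i j = W j i)
    (hcard : ∀ i, ({j | W i j ≠ 0} : Set G).ncard ≤ D)
    (hbd : ∀ i j, |W i j| ≤ 1 / (D : ℝ)) (hD : 0 < D) (Gn : Finset G) :
    ∀ l : ℕ, (∑ j ∈ Gn, ∑' k, (if k ∈ Gn then 0 else |Wpow W l k j|))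
      ≤ (l : ℝ) * (boundary W Gn : ℝ) := by
  have hbfin : ({i | i ∈ Gn ∧ ∃ j, j ∉ Gn ∧ W i j ≠ 0} : Set G).Finite :=
    Gn.finite_toSet.subset (fun x hx => hx.1)
  set bF := hbfin.toFinset with hbF
  have hbcard : (bF.card : ℝ) = (boundary W Gn : ℝ) := by
    rw [boundary, Set.ncard_eq_toFinset_card _ hbfin]
  have hsummable_out : ∀ (l : ℕ) (j : G),
      Summable (fun k => if k ∈ Gn then (0:ℝ) else |Wpow W l k j|) := by
    intro l j
    apply summable_of_finsupp ((colsupp_fin hfin hsym l j).subset ?_)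
    intro k hk
    simp only [Set.mem_setOf_eq] at hk ⊢
    intro h0
    apply hk
    by_cases hkG : k ∈ Gn
    · simp [hkG]
    · simp [hkG, h0]
  intro l
  induction l with
  | zero =>
    have hz : ∀ j ∈ Gn, (∑' k, (if k ∈ Gn then (0:ℝ) else |Wpow W 0 k j|)) = 0 := by
      intro j hj
      apply tsum_zero_of_all_zero
      intro k
      by_cases hk : k ∈ Gn
      · simp [hk]
      · have hkj : k ≠ j := fun e => hk (e ▸ hj)
        rw [if_neg hk]
        simp only [Wpow]
        rw [if_neg hkj, abs_zero]
    rw [Finset.sum_eq_zero hz]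
    simp
  | succ l ih =>
    -- per-j bound
    have main : ∀ j : G,
        (∑' k, (if k ∈ Gn then (0:ℝ) else |Wpow W (l+1) k j|))
        ≤ (∑ m ∈ bF, |Wpow W l m j|) + ∑' m, (if m ∈ Gn then (0:ℝ) else |Wpow W l m j|) := by
      intro j
      set x : G → G → ℝ := fun k m => |W k m| * |Wpow W l m j| with hxdef
      have hx0 : ∀ k m, x k m ≠ 0 → W k m ≠ 0 := by
        intro k m hkm
        intro h0
        apply hkm
        simp [hxdef, h0]
      have hMfin : ({m | Wpow W l m j ≠ 0} : Set G).Finite := colsupp_fin hfin hsym l j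
      set Mf := hMfin.toFinset with hMf
      -- summability in m for fixed k
      have hSin : ∀ k, Summable (fun m => if m ∈ Gn then x k m else 0) := by
        intro k
        apply summable_of_finsupp ((hfin k).subset ?_)
        intro m hm
        simp only [Set.mem_setOf_eq] at hm ⊢
        by_cases hmG : m ∈ Gn
        · rw [if_pos hmG] at hm; exact hx0 k m hm
        · rw [if_neg hmG] at hm; exact absurd rfl hm
      have hSout : ∀ k, Summable (fun m => if m ∈ Gn then (0:ℝ) else x k m) := by
        intro k
        apply summable_of_finsupp ((hfin k).subset ?_)
        intro m hm
        simp only [Set.mem_setOf_eq] at hm ⊢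
        by_cases hmG : m ∈ Gn
        · rw [if_pos hmG] at hm; exact absurd rfl hm
        · rw [if_neg hmG] at hm; exact hx0 k m hm
      -- summability in k of the two pieces
      have hSin' : Summable (fun k => if k ∈ Gn then (0:ℝ) else ∑' m, if m ∈ Gn then x k m else 0) := by
        apply summable_union_supp hfin hsym hMfin
        intro k hk
        by_cases hkG : k ∈ Gn
        · rw [if_pos hkG] at hk; exact absurd rfl hk
        · rw [if_neg hkG] at hk
          by_contra hc
          push_neg at hc
          apply hk
          apply tsum_zero_of_all_zero
          intro m
          by_cases hmG : m ∈ Gn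
          · rw [if_pos hmG]
            by_cases hWl : Wpow W l m j = 0
            · simp [hxdef, hWl]
            · have h1 : W k m = 0 := hc m hWl
              simp [hxdef, h1]
          · rw [if_neg hmG]
      have hSout' : Summable (fun k => if k ∈ Gn then (0:ℝ) else ∑' m, if m ∈ Gn then (0:ℝ) else x k m) := by
        apply summable_union_supp hfin hsym hMfin
        intro k hk
        by_cases hkG : k ∈ Gn
        · rw [if_pos hkG] at hk; exact absurd rfl hk
        · rw [if_neg hkG] at hk
          by_contra hc
          push_neg at hc
          apply hk
          apply tsum_zero_of_all_zero
          intro m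
          by_cases hmG : m ∈ Gn
          · rw [if_pos hmG]
          · rw [if_neg hmG]
            by_cases hWl : Wpow W l m j = 0
            · simp [hxdef, hWl]
            · have h1 : W k m = 0 := hc m hWl
              simp [hxdef, h1]
      -- pointwise split bound
      have step_k : ∀ k, (if k ∈ Gn then (0:ℝ) else |Wpow W (l+1) k j|)
          ≤ (if k ∈ Gn then (0:ℝ) else ∑' m, if m ∈ Gn then x k m else 0)
            + (if k ∈ Gn then (0:ℝ) else ∑' m, if m ∈ Gn then (0:ℝ) else x k m) := by
        intro k
        by_cases hk : k ∈ Gn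
        · simp [hk]
        · simp only [if_neg hk]
          have habs : Summable (fun m => ‖W k m * Wpow W l m j‖) := by
            apply summable_of_finsupp ((hfin k).subset ?_)
            intro m hm
            simp only [Set.mem_setOf_eq] at hm ⊢
            exact left_ne_zero_of_mul (by simpa [Real.norm_eq_abs] using hm)
          have e1 : |Wpow W (l+1) k j| ≤ ∑' m, x k m := by
            have e0 : Wpow W (l+1) k j = ∑' m, W k m * Wpow W l m j := by simp only [Wpow]
            rw [e0]
            have := norm_tsum_le_tsum_norm habs
            simpa [Real.norm_eq_abs, abs_mul, hxdef] using this
          have e2 : (∑' m, x k m) = (∑' m, if m ∈ Gn then x k m else 0)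
              + ∑' m, if m ∈ Gn then (0:ℝ) else x k m := by
            rw [← Summable.tsum_add (hSin k) (hSout k)]
            apply tsum_congr
            intro m
            by_cases hmG : m ∈ Gn <;> simp [hmG]
          linarith [e1, e2.le, e2.ge]
      -- bound for the "outside" piece
      have bound_out : (∑' k, (if k ∈ Gn then (0:ℝ) else ∑' m, if m ∈ Gn then (0:ℝ) else x k m))
          ≤ ∑' m, (if m ∈ Gn then (0:ℝ) else |Wpow W l m j|) := by
        have hper_m : ∀ m ∈ Mf, Summable (fun k => if m ∈ Gn then (0:ℝ) else x k m) := by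
          intro m _
          by_cases hmG : m ∈ Gn
          · simp only [if_pos hmG]; exact summable_zero
          · simp only [if_neg hmG, hxdef]
            exact (summable_abs_colW hfin hsym m).mul_right _
        have hRHSsum : Summable (fun k => ∑ m ∈ Mf, if m ∈ Gn then (0:ℝ) else x k m) :=
          summable_sum hper_m
        have hle : ∀ k, (if k ∈ Gn then (0:ℝ) else ∑' m, if m ∈ Gn then (0:ℝ) else x k m)
            ≤ ∑ m ∈ Mf, if m ∈ Gn then (0:ℝ) else x k m := by
          intro k
          have hnn : (0:ℝ) ≤ ∑ m ∈ Mf, if m ∈ Gn then (0:ℝ) else x k m := by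
            apply Finset.sum_nonneg
            intro m _
            by_cases hmG : m ∈ Gn
            · simp [hmG]
            · simp only [if_neg hmG, hxdef]; positivity
          by_cases hk : k ∈ Gn
          · simpa [hk] using hnn
          · rw [if_neg hk]
            apply le_of_eq
            rw [tsum_eq_sum (s := Mf) ?_]
            intro m hm
            simp only [hMf, Set.Finite.mem_toFinset, Set.mem_setOf_eq, not_not] at hm
            by_cases hmG : m ∈ Gn
            · simp [hmG]
            · simp [hmG, hxdef, hm]
        calc (∑' k, (if k ∈ Gn then (0:ℝ) else ∑' m, if m ∈ Gn then (0:ℝ) else x k m))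
            ≤ ∑' k, ∑ m ∈ Mf, if m ∈ Gn then (0:ℝ) else x k m :=
              Summable.tsum_le_tsum hle hSout' hRHSsum
          _ = ∑ m ∈ Mf, ∑' k, (if m ∈ Gn then (0:ℝ) else x k m) := Summable.tsum_finsetSum hper_m
          _ ≤ ∑ m ∈ Mf, (if m ∈ Gn then (0:ℝ) else |Wpow W l m j|) := by
              apply Finset.sum_le_sum
              intro m _
              by_cases hmG : m ∈ Gn
              · simp [hmG]
              · simp only [if_neg hmG, hxdef]
                rw [tsum_mul_right]
                exact mul_le_of_le_one_left (abs_nonneg _) (colsum_W_le hfin hsym hcard hbd hD m)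
          _ = ∑' m, (if m ∈ Gn then (0:ℝ) else |Wpow W l m j|) := by
              symm
              rw [tsum_eq_sum (s := Mf) ?_]
              intro m hm
              simp only [hMf, Set.Finite.mem_toFinset, Set.mem_setOf_eq, not_not] at hm
              by_cases hmG : m ∈ Gn
              · simp [hmG]
              · simp [hmG, hm]
      -- bound for the "boundary" piece
      have bound_in : (∑' k, (if k ∈ Gn then (0:ℝ) else ∑' m, if m ∈ Gn then x k m else 0))
          ≤ ∑ m ∈ bF, |Wpow W l m j| := by
        have hper_m : ∀ m ∈ bF, Summable (fun k => x k m) := by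
          intro m _
          simp only [hxdef]
          exact (summable_abs_colW hfin hsym m).mul_right _
        have hRHSsum : Summable (fun k => ∑ m ∈ bF, x k m) := summable_sum hper_m
        have hle : ∀ k, (if k ∈ Gn then (0:ℝ) else ∑' m, if m ∈ Gn then x k m else 0)
            ≤ ∑ m ∈ bF, x k m := by
          intro k
          have hnn : (0:ℝ) ≤ ∑ m ∈ bF, x k m := by
            apply Finset.sum_nonneg
            intro m _
            simp only [hxdef]; positivity
          by_cases hk : k ∈ Gn
          · simpa [hk] using hnn
          · rw [if_neg hk]
            have e : ∀ m, (if m ∈ Gn then x k m else 0) = (if m ∈ bF then x k m else 0) := by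
              intro m
              by_cases hmG : m ∈ Gn
              · rw [if_pos hmG]
                by_cases hW : W k m = 0
                · have : x k m = 0 := by simp [hxdef, hW]
                  rw [this]; simp
                · have hmb : m ∈ bF := by
                    rw [hbF, Set.Finite.mem_toFinset]
                    exact ⟨hmG, k, hk, by rwa [hsym m k]⟩
                  rw [if_pos hmb]
              · rw [if_neg hmG]
                have hmb : m ∉ bF := by
                  rw [hbF, Set.Finite.mem_toFinset]
                  exact fun hc => hmG hc.1
                rw [if_neg hmb]
            apply le_of_eq
            rw [tsum_congr e, tsum_eq_sum (s := bF) (fun m hm => if_neg hm)]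
            exact Finset.sum_congr rfl (fun m hm => if_pos hm)
        calc (∑' k, (if k ∈ Gn then (0:ℝ) else ∑' m, if m ∈ Gn then x k m else 0))
            ≤ ∑' k, ∑ m ∈ bF, x k m := Summable.tsum_le_tsum hle hSin' hRHSsum
          _ = ∑ m ∈ bF, ∑' k, x k m := Summable.tsum_finsetSum hper_m
          _ ≤ ∑ m ∈ bF, |Wpow W l m j| := by
              apply Finset.sum_le_sum
              intro m _
              simp only [hxdef]
              rw [tsum_mul_right]
              exact mul_le_of_le_one_left (abs_nonneg _) (colsum_W_le hfin hsym hcard hbd hD m)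
      calc (∑' k, (if k ∈ Gn then (0:ℝ) else |Wpow W (l+1) k j|))
          ≤ ∑' k, ((if k ∈ Gn then (0:ℝ) else ∑' m, if m ∈ Gn then x k m else 0)
            + (if k ∈ Gn then (0:ℝ) else ∑' m, if m ∈ Gn then (0:ℝ) else x k m)) :=
            Summable.tsum_le_tsum step_k (hsummable_out (l+1) j) (hSin'.add hSout')
        _ = (∑' k, (if k ∈ Gn then (0:ℝ) else ∑' m, if m ∈ Gn then x k m else 0))
            + ∑' k, (if k ∈ Gn then (0:ℝ) else ∑' m, if m ∈ Gn then (0:ℝ) else x k m) :=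
            Summable.tsum_add hSin' hSout'
        _ ≤ (∑ m ∈ bF, |Wpow W l m j|) + ∑' m, (if m ∈ Gn then (0:ℝ) else |Wpow W l m j|) :=
            add_le_add bound_in bound_out
    -- sum over j ∈ Gn
    have hA : (∑ j ∈ Gn, ∑ m ∈ bF, |Wpow W l m j|) ≤ (boundary W Gn : ℝ) := by
      rw [Finset.sum_comm]
      calc (∑ m ∈ bF, ∑ j ∈ Gn, |Wpow W l m j|) ≤ ∑ m ∈ bF, (1:ℝ) := by
            apply Finset.sum_le_sum
            intro m _
            calc (∑ j ∈ Gn, |Wpow W l m j|) ≤ ∑' j, |Wpow W l m j| :=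
                  Summable.sum_le_tsum Gn (fun j _ => abs_nonneg _) (summable_abs_rowpow hfin l m)
              _ ≤ 1 := rowsum_pow_le hfin hcard hbd hD l m
        _ = (bF.card : ℝ) := by rw [Finset.sum_const, nsmul_eq_mul, mul_one]
        _ = (boundary W Gn : ℝ) := hbcard
    calc (∑ j ∈ Gn, ∑' k, (if k ∈ Gn then (0:ℝ) else |Wpow W (l+1) k j|))
        ≤ ∑ j ∈ Gn, ((∑ m ∈ bF, |Wpow W l m j|)
            + ∑' m, (if m ∈ Gn then (0:ℝ) else |Wpow W l m j|)) :=
          Finset.sum_le_sum (fun j _ => main j)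
      _ = (∑ j ∈ Gn, ∑ m ∈ bF, |Wpow W l m j|)
            + ∑ j ∈ Gn, ∑' m, (if m ∈ Gn then (0:ℝ) else |Wpow W l m j|) :=
          Finset.sum_add_distrib
      _ ≤ (boundary W Gn : ℝ) + (l : ℝ) * (boundary W Gn : ℝ) := add_le_add hA ih
      _ = ((l + 1 : ℕ) : ℝ) * (boundary W Gn : ℝ) := by push_cast; ring


/-- summability of the outside-indicator column family -/
lemma summable_out (hfin : ∀ i, ({j | W i j ≠ 0} : Set G).Finite)
    (hsym : ∀ i j, W i j = W j i) (Gn : Finset G) (l : ℕ) (j : G) :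
    Summable (fun k => if k ∈ Gn then (0:ℝ) else |Wpow W l k j|) := by
  apply summable_of_finsupp ((colsupp_fin hfin hsym l j).subset ?_)
  intro k hk
  simp only [Set.mem_setOf_eq] at hk ⊢
  intro h0
  apply hk
  by_cases hkG : k ∈ Gn
  · simp [hkG]
  · simp [hkG, h0]

def Ubd (W : G → G → ℝ) (Gn : Finset G) (p : ℕ × ℕ) (i j : G) : ℝ :=
  ∑' k, if k ∈ Gn then 0 else |Wpow W p.1 i k| * |Wpow W p.2 k j|

lemma summable_Ubd_term (hfin : ∀ i, ({j | W i j ≠ 0} : Set G).Finite)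
    (Gn : Finset G) (p : ℕ × ℕ) (i j : G) :
    Summable (fun k => if k ∈ Gn then (0:ℝ) else |Wpow W p.1 i k| * |Wpow W p.2 k j|) := by
  apply summable_of_finsupp ((rowsupp_fin hfin p.1 i).subset ?_)
  intro k hk
  simp only [Set.mem_setOf_eq] at hk ⊢
  intro h0
  apply hk
  by_cases hkG : k ∈ Gn
  · simp [hkG]
  · simp [hkG, h0]

lemma Ubd_nonneg (Gn : Finset G) (p : ℕ × ℕ) (i j : G) : 0 ≤ Ubd W Gn p i j := by
  apply tsum_nonneg
  intro k
  by_cases hk : k ∈ Gn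
  · simp [Ubd, hk]
  · simp only [Ubd, if_neg hk]; positivity

lemma Ubd_le_one (hfin : ∀ i, ({j | W i j ≠ 0} : Set G).Finite)
    (hcard : ∀ i, ({j | W i j ≠ 0} : Set G).ncard ≤ D)
    (hbd : ∀ i j, |W i j| ≤ 1 / (D : ℝ)) (hD : 0 < D)
    (Gn : Finset G) (p : ℕ × ℕ) (i j : G) : Ubd W Gn p i j ≤ 1 := by
  have h1 : Ubd W Gn p i j ≤ ∑' k, |Wpow W p.1 i k| := by
    apply Summable.tsum_le_tsum _ (summable_Ubd_term hfin Gn p i j) (summable_abs_rowpow hfin p.1 i)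
    intro k
    by_cases hk : k ∈ Gn
    · simp [hk]
    · simp only [if_neg hk]
      exact mul_le_of_le_one_right (abs_nonneg _) (abs_Wpow_le_one hfin hcard hbd hD p.2 k j)
  exact h1.trans (rowsum_pow_le hfin hcard hbd hD p.1 i)

section WithFG
variable {f g : ℕ → ℝ}

lemma hKnorm (hfin : ∀ i, ({j | W i j ≠ 0} : Set G).Finite)
    (hcard : ∀ i, ({j | W i j ≠ 0} : Set G).ncard ≤ D)
    (hbd : ∀ i j, |W i j| ≤ 1 / (D : ℝ)) (hD : 0 < D)
    {φ : ℕ → ℝ} (hφ : Summable (fun h => |φ h|)) (a b : G) :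
    Summable (fun h => ‖φ h * Wpow W h a b‖) := by
  apply Summable.of_nonneg_of_le (fun _ => norm_nonneg _) _ hφ
  intro h
  rw [Real.norm_eq_abs, abs_mul]
  exact mul_le_of_le_one_right (abs_nonneg _) (abs_Wpow_le_one hfin hcard hbd hD h a b)

lemma Kmat_mul (hfin : ∀ i, ({j | W i j ≠ 0} : Set G).Finite)
    (hcard : ∀ i, ({j | W i j ≠ 0} : Set G).ncard ≤ D)
    (hbd : ∀ i j, |W i j| ≤ 1 / (D : ℝ)) (hD : 0 < D)
    (hf : Summable (fun h => |f h|)) (hg' : Summable (fun h => |g h|)) (i k j : G) :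
    Kmat W f i k * Kmat W g k j
      = ∑' p : ℕ × ℕ, (f p.1 * Wpow W p.1 i k) * (g p.2 * Wpow W p.2 k j) :=
  tsum_mul_tsum_of_summable_norm (hKnorm hfin hcard hbd hD hf i k)
    (hKnorm hfin hcard hbd hD hg' k j)

lemma hSF (hfin : ∀ i, ({j | W i j ≠ 0} : Set G).Finite)
    (hcard : ∀ i, ({j | W i j ≠ 0} : Set G).ncard ≤ D)
    (hbd : ∀ i j, |W i j| ≤ 1 / (D : ℝ)) (hD : 0 < D)
    (hf : Summable (fun h => |f h|)) (hg' : Summable (fun h => |g h|)) (i j : G) :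
    Summable (fun p : ℕ × ℕ => f p.1 * g p.2 * Wpow W (p.1 + p.2) i j) := by
  rw [← summable_abs_iff]
  apply Summable.of_nonneg_of_le (fun _ => abs_nonneg _) _
    (hf.mul_of_nonneg hg' (fun _ => abs_nonneg _) (fun _ => abs_nonneg _))
  intro p
  rw [abs_mul, abs_mul]
  calc |f p.1| * |g p.2| * |Wpow W (p.1+p.2) i j|
      ≤ |f p.1| * |g p.2| * 1 := by
        apply mul_le_mul_of_nonneg_left (abs_Wpow_le_one hfin hcard hbd hD _ i j) (by positivity)
    _ = |f p.1| * |g p.2| := mul_one _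

lemma tsum_prod_antidiagonal {F : ℕ × ℕ → ℝ} (hS : Summable F) :
    (∑' p : ℕ × ℕ, F p) = ∑' n : ℕ, ∑ p ∈ Finset.HasAntidiagonal.antidiagonal n, F p := by
  have e1 := (Finset.HasAntidiagonal.sigmaAntidiagonalEquivProd (A := ℕ)).tsum_eq F
  rw [← e1]
  have hSσ : Summable (fun σ : Σ n : ℕ, (Finset.HasAntidiagonal.antidiagonal n : Finset (ℕ × ℕ)) =>
      F (Finset.HasAntidiagonal.sigmaAntidiagonalEquivProd σ)) := (Equiv.summable_iff _).2 hS
  rw [Summable.tsum_sigma' (fun n => Summable.of_finite) hSσ]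
  apply tsum_congr
  intro n
  have e2 : ∀ c : (Finset.HasAntidiagonal.antidiagonal n : Finset (ℕ × ℕ)),
      F (Finset.HasAntidiagonal.sigmaAntidiagonalEquivProd ⟨n, c⟩) = F (c : ℕ × ℕ) := fun c => rfl
  rw [tsum_congr e2, Finset.tsum_subtype (Finset.HasAntidiagonal.antidiagonal n) F]

lemma Kmat_cauchy (hfin : ∀ i, ({j | W i j ≠ 0} : Set G).Finite)
    (hcard : ∀ i, ({j | W i j ≠ 0} : Set G).ncard ≤ D)
    (hbd : ∀ i j, |W i j| ≤ 1 / (D : ℝ)) (hD : 0 < D)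
    (hf : Summable (fun h => |f h|)) (hg' : Summable (fun h => |g h|)) (i j : G) :
    Kmat W (cauchy f g) i j = ∑' p : ℕ × ℕ, f p.1 * g p.2 * Wpow W (p.1 + p.2) i j := by
  rw [tsum_prod_antidiagonal (hSF hfin hcard hbd hD hf hg' i j), Kmat]
  apply tsum_congr
  intro n
  have e3 : ∀ p ∈ Finset.HasAntidiagonal.antidiagonal n,
      f p.1 * g p.2 * Wpow W (p.1 + p.2) i j = (f p.1 * g p.2) * Wpow W n i j := by
    intro p hp
    rw [Finset.HasAntidiagonal.mem_antidiagonal] at hp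
    rw [hp]
  rw [Finset.sum_congr rfl e3, ← Finset.sum_mul]
  congr 1
  rw [Finset.Nat.sum_antidiagonal_eq_sum_range_succ_mk (fun p => f p.1 * g p.2) n]
  rfl

lemma Wpow_split (hfin : ∀ i, ({j | W i j ≠ 0} : Set G).Finite)
    (Gn : Finset G) (p1 p2 : ℕ) (i j : G) :
    Wpow W (p1 + p2) i j = (∑ k ∈ Gn, Wpow W p1 i k * Wpow W p2 k j)
      + ∑' k, if k ∈ Gn then 0 else Wpow W p1 i k * Wpow W p2 k j := by
  rw [Wpow_comp hfin p1 p2 i j]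
  have hsupp : ∀ (F : G → ℝ), (∀ k, F k ≠ 0 → Wpow W p1 i k ≠ 0) → Summable F := by
    intro F hF
    exact summable_of_finsupp ((rowsupp_fin hfin p1 i).subset (fun k hk => hF k hk))
  have S1 : Summable (fun k => if k ∈ Gn then Wpow W p1 i k * Wpow W p2 k j else 0) := by
    apply hsupp
    intro k hk
    by_cases hkG : k ∈ Gn
    · rw [if_pos hkG] at hk; exact left_ne_zero_of_mul hk
    · rw [if_neg hkG] at hk; exact absurd rfl hk
  have S2 : Summable (fun k => if k ∈ Gn then (0:ℝ) else Wpow W p1 i k * Wpow W p2 k j) := by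
    apply hsupp
    intro k hk
    by_cases hkG : k ∈ Gn
    · rw [if_pos hkG] at hk; exact absurd rfl hk
    · rw [if_neg hkG] at hk; exact left_ne_zero_of_mul hk
  have e : ∀ k, Wpow W p1 i k * Wpow W p2 k j
      = (if k ∈ Gn then Wpow W p1 i k * Wpow W p2 k j else 0)
        + (if k ∈ Gn then (0:ℝ) else Wpow W p1 i k * Wpow W p2 k j) := by
    intro k; by_cases hk : k ∈ Gn <;> simp [hk]
  rw [tsum_congr e, Summable.tsum_add S1 S2]
  congr 1
  rw [tsum_eq_sum (s := Gn) (fun k hk => if_neg hk)]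
  exact Finset.sum_congr rfl (fun k hk => if_pos hk)

set_option maxHeartbeats 1000000 in
lemma entry_eq (hfin : ∀ i, ({j | W i j ≠ 0} : Set G).Finite)
    (hcard : ∀ i, ({j | W i j ≠ 0} : Set G).ncard ≤ D)
    (hbd : ∀ i j, |W i j| ≤ 1 / (D : ℝ)) (hD : 0 < D)
    (hf : Summable (fun h => |f h|)) (hg' : Summable (fun h => |g h|))
    (Gn : Finset G) (i j : G) :
    (∑ k ∈ Gn, Kmat W f i k * Kmat W g k j) - Kmat W (cauchy f g) i j
      = - ∑' p : ℕ × ℕ, f p.1 * g p.2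
          * (∑' k, if k ∈ Gn then 0 else Wpow W p.1 i k * Wpow W p.2 k j) := by
  have hprod : ∀ k, Summable (fun p : ℕ × ℕ =>
      (f p.1 * Wpow W p.1 i k) * (g p.2 * Wpow W p.2 k j)) := fun k =>
    summable_mul_of_summable_norm (hKnorm hfin hcard hbd hD hf i k)
      (hKnorm hfin hcard hbd hD hg' k j)
  have h1 : ∀ k ∈ Gn, Kmat W f i k * Kmat W g k j
      = ∑' p : ℕ × ℕ, (f p.1 * Wpow W p.1 i k) * (g p.2 * Wpow W p.2 k j) :=
    fun k _ => Kmat_mul hfin hcard hbd hD hf hg' i k j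
  rw [Finset.sum_congr rfl h1, ← Summable.tsum_finsetSum (fun k _ => hprod k),
    Kmat_cauchy hfin hcard hbd hD hf hg' i j,
    ← Summable.tsum_sub (summable_sum (fun k _ => hprod k)) (hSF hfin hcard hbd hD hf hg' i j),
    ← tsum_neg]
  apply tsum_congr
  intro p
  rw [Wpow_split hfin Gn p.1 p.2 i j]
  have e : (∑ k ∈ Gn, (f p.1 * Wpow W p.1 i k) * (g p.2 * Wpow W p.2 k j))
      = f p.1 * g p.2 * ∑ k ∈ Gn, Wpow W p.1 i k * Wpow W p.2 k j := by
    rw [Finset.mul_sum]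
    exact Finset.sum_congr rfl (fun k _ => by ring)
  rw [e]
  ring

lemma summable_Bnd (hfin : ∀ i, ({j | W i j ≠ 0} : Set G).Finite)
    (hcard : ∀ i, ({j | W i j ≠ 0} : Set G).ncard ≤ D)
    (hbd : ∀ i j, |W i j| ≤ 1 / (D : ℝ)) (hD : 0 < D)
    (hf : Summable (fun h => |f h|)) (hg' : Summable (fun h => |g h|))
    (Gn : Finset G) (i j : G) :
    Summable (fun p : ℕ × ℕ => |f p.1| * |g p.2| * Ubd W Gn p i j) := by
  apply Summable.of_nonneg_of_le
    (fun p => mul_nonneg (mul_nonneg (abs_nonneg _) (abs_nonneg _)) (Ubd_nonneg Gn p i j))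
    _ (hf.mul_of_nonneg hg' (fun _ => abs_nonneg _) (fun _ => abs_nonneg _))
  intro p
  exact mul_le_of_le_one_right (by positivity) (Ubd_le_one hfin hcard hbd hD Gn p i j)

lemma entry_bound (hfin : ∀ i, ({j | W i j ≠ 0} : Set G).Finite)
    (hcard : ∀ i, ({j | W i j ≠ 0} : Set G).ncard ≤ D)
    (hbd : ∀ i j, |W i j| ≤ 1 / (D : ℝ)) (hD : 0 < D)
    (hf : Summable (fun h => |f h|)) (hg' : Summable (fun h => |g h|))
    (Gn : Finset G) (i j : G) :
    |(∑ k ∈ Gn, Kmat W f i k * Kmat W g k j) - Kmat W (cauchy f g) i j|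
      ≤ ∑' p : ℕ × ℕ, |f p.1| * |g p.2| * Ubd W Gn p i j := by
  rw [entry_eq hfin hcard hbd hD hf hg' Gn i j, abs_neg]
  have hOut : ∀ p : ℕ × ℕ,
      |∑' k, if k ∈ Gn then (0:ℝ) else Wpow W p.1 i k * Wpow W p.2 k j| ≤ Ubd W Gn p i j := by
    intro p
    have hs : Summable (fun k => ‖if k ∈ Gn then (0:ℝ) else Wpow W p.1 i k * Wpow W p.2 k j‖) := by
      apply summable_of_finsupp ((rowsupp_fin hfin p.1 i).subset ?_)
      intro k hk
      simp only [Set.mem_setOf_eq] at hk ⊢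
      intro h0
      apply hk
      by_cases hkG : k ∈ Gn
      · simp [hkG]
      · simp [hkG, h0]
    have h2 := norm_tsum_le_tsum_norm hs
    rw [Real.norm_eq_abs] at h2
    apply h2.trans
    apply le_of_eq
    apply tsum_congr
    intro k
    by_cases hk : k ∈ Gn
    · simp [hk]
    · simp [hk, Real.norm_eq_abs, abs_mul]
  have habs : ∀ p : ℕ × ℕ,
      |f p.1 * g p.2 * (∑' k, if k ∈ Gn then (0:ℝ) else Wpow W p.1 i k * Wpow W p.2 k j)|
        ≤ |f p.1| * |g p.2| * Ubd W Gn p i j := by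
    intro p
    rw [abs_mul, abs_mul]
    exact mul_le_mul_of_nonneg_left (hOut p) (by positivity)
  have hRHS := summable_Bnd hfin hcard hbd hD hf hg' (f := f) (g := g) Gn i j
  have hLHSabs : Summable (fun p : ℕ × ℕ =>
      |f p.1 * g p.2 * (∑' k, if k ∈ Gn then (0:ℝ) else Wpow W p.1 i k * Wpow W p.2 k j)|) :=
    Summable.of_nonneg_of_le (fun _ => abs_nonneg _) habs hRHS
  have h1 : Summable (fun p : ℕ × ℕ =>
      ‖f p.1 * g p.2 * (∑' k, if k ∈ Gn then (0:ℝ) else Wpow W p.1 i k * Wpow W p.2 k j)‖) := by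
    simpa only [Real.norm_eq_abs] using hLHSabs
  have h2 := norm_tsum_le_tsum_norm h1
  rw [Real.norm_eq_abs] at h2
  refine h2.trans ?_
  have h3 : (∑' p : ℕ × ℕ,
      ‖f p.1 * g p.2 * (∑' k, if k ∈ Gn then (0:ℝ) else Wpow W p.1 i k * Wpow W p.2 k j)‖)
      = ∑' p : ℕ × ℕ,
      |f p.1 * g p.2 * (∑' k, if k ∈ Gn then (0:ℝ) else Wpow W p.1 i k * Wpow W p.2 k j)| := by
    simp only [Real.norm_eq_abs]
  rw [h3]
  exact Summable.tsum_le_tsum habs hLHSabs hRHS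

lemma sumI (hfin : ∀ i, ({j | W i j ≠ 0} : Set G).Finite)
    (hsym : ∀ i j, W i j = W j i)
    (hcard : ∀ i, ({j | W i j ≠ 0} : Set G).ncard ≤ D)
    (hbd : ∀ i j, |W i j| ≤ 1 / (D : ℝ)) (hD : 0 < D)
    (Gn : Finset G) (p : ℕ × ℕ) (j : G) :
    (∑ i ∈ Gn, Ubd W Gn p i j) ≤ ∑' k, if k ∈ Gn then (0:ℝ) else |Wpow W p.2 k j| := by
  have hek : ∀ i ∈ Gn, Summable (fun k =>
      if k ∈ Gn then (0:ℝ) else |Wpow W p.1 i k| * |Wpow W p.2 k j|) :=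
    fun i _ => summable_Ubd_term hfin Gn p i j
  have e : (∑ i ∈ Gn, Ubd W Gn p i j)
      = ∑' k, ∑ i ∈ Gn, (if k ∈ Gn then (0:ℝ) else |Wpow W p.1 i k| * |Wpow W p.2 k j|) := by
    rw [Summable.tsum_finsetSum hek]
    rfl
  rw [e]
  apply Summable.tsum_le_tsum _ (summable_sum hek) (summable_out hfin hsym Gn p.2 j)
  intro k
  by_cases hk : k ∈ Gn
  · simp [hk]
  · simp only [if_neg hk]
    rw [← Finset.sum_mul]
    apply mul_le_of_le_one_left (abs_nonneg _)
    calc (∑ i ∈ Gn, |Wpow W p.1 i k|) ≤ ∑' i, |Wpow W p.1 i k| :=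
          Summable.sum_le_tsum Gn (fun i _ => abs_nonneg _)
            (by
              have : (fun i => |Wpow W p.1 i k|) = fun i => |Wpow W p.1 k i| := by
                funext i; rw [Wpow_symm hfin hsym]
              rw [this]; exact summable_abs_rowpow hfin p.1 k)
      _ ≤ 1 := colsum_pow_le hfin hsym hcard hbd hD p.1 k

end WithFG

end Stmt1Aux

open Stmt1Aux in
/-- For power series `f, g` with `‖f‖_{1,pol} < ∞` and `α(g) < ∞`,
`b_n(K_n(f)·K_n(g) − K_n(f·g)) ≤ ‖f‖_{1,pol} · α(g)`. -/
theorem stmt1 {G : Type*} [Countable G] (W : G → G → ℝ) (D : ℕ) (hD : 0 < D)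
    (hker : KernelHyp W D)
    (f g : ℕ → ℝ)
    (hf : Summable (fun h => |f h|))
    (hg : Summable (fun h => |g h| * (h + 1 : ℝ)))
    (Gn : Finset G) (hδ : 0 < boundary W Gn) :
    blockNorm W Gn (Kn W f Gn * Kn W g Gn - Kn W (cauchy f g) Gn)
      ≤ polNorm f * regFactor g := by
  obtain ⟨hsym, hfin, hcard, hbd⟩ := hker
  have hg' : Summable (fun l => |g l|) := by
    apply Summable.of_nonneg_of_le (fun _ => abs_nonneg _) _ hg
    intro l
    exact le_mul_of_one_le_right (abs_nonneg _) (le_add_of_nonneg_left (Nat.cast_nonneg l))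
  have hδR : (0:ℝ) < (boundary W Gn : ℝ) := by exact_mod_cast hδ
  set δ : ℝ := (boundary W Gn : ℝ) with hδdef
  have key : (∑ i : Gn, ∑ j : Gn, |(Kn W f Gn * Kn W g Gn - Kn W (cauchy f g) Gn) i j|)
      ≤ polNorm f * (regFactor g * δ) := by
    have hentry : ∀ i j : Gn, (Kn W f Gn * Kn W g Gn - Kn W (cauchy f g) Gn) i j
        = (∑ k ∈ Gn, Kmat W f (i:G) k * Kmat W g k (j:G)) - Kmat W (cauchy f g) (i:G) (j:G) := by
      intro i j
      rw [Matrix.sub_apply, Matrix.mul_apply,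
        ← Finset.sum_coe_sort Gn (fun k => Kmat W f (i:G) k * Kmat W g k (j:G))]
      rfl
    have e0 : (∑ i : Gn, ∑ j : Gn, |(Kn W f Gn * Kn W g Gn - Kn W (cauchy f g) Gn) i j|)
        = ∑ i ∈ Gn, ∑ j ∈ Gn,
            |(∑ k ∈ Gn, Kmat W f i k * Kmat W g k j) - Kmat W (cauchy f g) i j| := by
      rw [← Finset.sum_coe_sort Gn (fun i => ∑ j ∈ Gn,
        |(∑ k ∈ Gn, Kmat W f i k * Kmat W g k j) - Kmat W (cauchy f g) i j|)]
      apply Finset.sum_congr rfl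
      intro i _
      rw [← Finset.sum_coe_sort Gn (fun j =>
        |(∑ k ∈ Gn, Kmat W f (i:G) k * Kmat W g k j) - Kmat W (cauchy f g) (i:G) j|)]
      apply Finset.sum_congr rfl
      intro j _
      rw [hentry i j]
    rw [e0]
    have hB : ∀ (i : G) (j : G), Summable (fun p : ℕ × ℕ => |f p.1| * |g p.2| * Ubd W Gn p i j) :=
      fun i j => summable_Bnd hfin hcard hbd hD hf hg' Gn i j
    have hgδ : Summable (fun l => |g l| * (((l:ℝ)+1) * δ)) := by
      have h1 := hg.mul_right δ
      have e : (fun l => |g l| * ((l:ℝ)+1) * δ) = fun l => |g l| * (((l:ℝ)+1) * δ) := by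
        funext l; ring
      rwa [e] at h1
    calc (∑ i ∈ Gn, ∑ j ∈ Gn,
          |(∑ k ∈ Gn, Kmat W f i k * Kmat W g k j) - Kmat W (cauchy f g) i j|)
        ≤ ∑ i ∈ Gn, ∑ j ∈ Gn, ∑' p : ℕ × ℕ, |f p.1| * |g p.2| * Ubd W Gn p i j :=
          Finset.sum_le_sum (fun i _ => Finset.sum_le_sum (fun j _ =>
            entry_bound hfin hcard hbd hD hf hg' Gn i j))
      _ = ∑' p : ℕ × ℕ, ∑ i ∈ Gn, ∑ j ∈ Gn, |f p.1| * |g p.2| * Ubd W Gn p i j := by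
          rw [Finset.sum_congr rfl (fun i _ =>
            (Summable.tsum_finsetSum (f := fun j p => |f p.1| * |g p.2| * Ubd W Gn p i j)
              (fun j _ => hB i j)).symm)]
          exact (Summable.tsum_finsetSum (fun i _ => summable_sum (fun j _ => hB i j))).symm
      _ ≤ ∑' p : ℕ × ℕ, |f p.1| * (|g p.2| * (((p.2:ℝ)+1) * δ)) := by
          apply Summable.tsum_le_tsum _ (summable_sum (fun i _ => summable_sum (fun j _ => hB i j)))
            (hf.mul_of_nonneg hgδ (fun _ => abs_nonneg _) (fun l => by positivity))
          intro p
          have hU : (∑ i ∈ Gn, ∑ j ∈ Gn, Ubd W Gn p i j) ≤ ((p.2:ℝ)+1) * δ := by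
            rw [Finset.sum_comm]
            calc (∑ j ∈ Gn, ∑ i ∈ Gn, Ubd W Gn p i j)
                ≤ ∑ j ∈ Gn, ∑' k, (if k ∈ Gn then (0:ℝ) else |Wpow W p.2 k j|) :=
                  Finset.sum_le_sum (fun j _ => sumI hfin hsym hcard hbd hD Gn p j)
              _ ≤ (p.2 : ℝ) * δ := cross hfin hsym hcard hbd hD Gn p.2
              _ ≤ ((p.2:ℝ)+1) * δ := by nlinarith [hδR.le]
          have e2 : (∑ i ∈ Gn, ∑ j ∈ Gn, |f p.1| * |g p.2| * Ubd W Gn p i j)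
              = (|f p.1| * |g p.2|) * ∑ i ∈ Gn, ∑ j ∈ Gn, Ubd W Gn p i j := by
            rw [Finset.mul_sum]
            exact Finset.sum_congr rfl (fun i _ => by rw [Finset.mul_sum])
          rw [e2]
          calc (|f p.1| * |g p.2|) * (∑ i ∈ Gn, ∑ j ∈ Gn, Ubd W Gn p i j)
              ≤ (|f p.1| * |g p.2|) * (((p.2:ℝ)+1) * δ) :=
                mul_le_mul_of_nonneg_left hU (by positivity)
            _ = |f p.1| * (|g p.2| * (((p.2:ℝ)+1) * δ)) := by ring
      _ = polNorm f * (regFactor g * δ) := by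
          have hfn : Summable (fun h => ‖|f h|‖) := by
            simpa only [Real.norm_eq_abs, abs_abs] using hf
          have hgn : Summable (fun l => ‖|g l| * (((l:ℝ)+1) * δ)‖) := by
            have e : (fun l => ‖|g l| * (((l:ℝ)+1) * δ)‖)
                = fun l => |g l| * (((l:ℝ)+1) * δ) := by
              funext l; rw [Real.norm_eq_abs, abs_of_nonneg (by positivity)]
            rw [e]; exact hgδ
          rw [← tsum_mul_tsum_of_summable_norm hfn hgn, polNorm]
          congr 1
          have e : (fun l => |g l| * (((l:ℝ)+1) * δ)) = fun l => (|g l| * ((l:ℝ)+1)) * δ := by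
            funext l; ring
          rw [e, tsum_mul_right, regFactor]
  rw [blockNorm]
  calc (1 / δ) * (∑ i : Gn, ∑ j : Gn, |(Kn W f Gn * Kn W g Gn - Kn W (cauchy f g) Gn) i j|)
      ≤ (1 / δ) * (polNorm f * (regFactor g * δ)) :=
        mul_le_mul_of_nonneg_left key (by positivity)
    _ = polNorm f * regFactor g := by
        rw [show (1/δ) * (polNorm f * (regFactor g * δ))
          = (polNorm f * regFactor g) * (δ / δ) from by ring, div_self hδR.ne', mul_one]


end
end

section
/- For every h ∈ ℕ and every finite subset G_N ⊆ G, the porosity sum satisfies Σ_{k ∈ G∖G_N} Σ_{j ∈ G_N} |(W^h)(k,j)| ≤ (h+1)·δ_N. In particular, the porosity factor Δ_h := sup_N (1/δ_N) Σ_{k∈G∖G_N} Σ_{j∈G_N} |(W^h)(k,j)| satisfies Δ_h ≤ h+1. -/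
open scoped BigOperators Classical
open MeasureTheory Filter ProbabilityTheory

noncomputable section

variable {G : Type*}

section Aux

variable {G : Type*} (W : G → G → ℝ) (D : ℕ)

/-- Any finite partial row sum of |W| is at most 1. -/
lemma rowA (hD : 0 < D) (hfin : ∀ i, ({j | W i j ≠ 0} : Set G).Finite)
    (hcard : ∀ i, ({j | W i j ≠ 0} : Set G).ncard ≤ D)
    (hbd : ∀ i j, |W i j| ≤ 1 / (D : ℝ)) (i : G) (F : Finset G) :
    ∑ k ∈ F, |W i k| ≤ 1 := by
  classical
  have h1 : ∑ k ∈ F, |W i k| = ∑ k ∈ F.filter (fun k => W i k ≠ 0), |W i k| := by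
    refine (Finset.sum_subset (Finset.filter_subset _ _) ?_).symm
    intro x hx hx'
    simp only [Finset.mem_filter, not_and, not_not] at hx'
    simp [hx' hx]
  rw [h1]
  have h2 : ∑ k ∈ F.filter (fun k => W i k ≠ 0), |W i k|
      ≤ (F.filter (fun k => W i k ≠ 0)).card • (1 / (D : ℝ)) :=
    Finset.sum_le_card_nsmul _ _ _ (fun k _ => hbd i k)
  have h3 : (F.filter (fun k => W i k ≠ 0)).card ≤ D := by
    have hsub : (↑(F.filter (fun k => W i k ≠ 0)) : Set G) ⊆ {j | W i j ≠ 0} := by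
      intro x hx
      simp only [Finset.coe_filter, Set.mem_setOf_eq] at hx ⊢
      exact hx.2
    calc (F.filter (fun k => W i k ≠ 0)).card
        = (↑(F.filter (fun k => W i k ≠ 0)) : Set G).ncard := (Set.ncard_coe_finset _).symm
      _ ≤ ({j | W i j ≠ 0} : Set G).ncard := Set.ncard_le_ncard hsub (hfin i)
      _ ≤ D := hcard i
  calc ∑ k ∈ F.filter (fun k => W i k ≠ 0), |W i k|
      ≤ (F.filter (fun k => W i k ≠ 0)).card • (1 / (D : ℝ)) := h2
    _ ≤ D • (1 / (D : ℝ)) := by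
        refine nsmul_le_nsmul_left (by positivity) h3
    _ = 1 := by
        rw [nsmul_eq_mul]
        field_simp

/-- `Wpow (h+1)` as a finite sum over the row support. -/
lemma pow_succ_eq_sum (hfin : ∀ i, ({j | W i j ≠ 0} : Set G).Finite) (h : ℕ) (i j : G) :
    Wpow W (h + 1) i j = ∑ m ∈ (hfin i).toFinset, W i m * Wpow W h m j := by
  show (∑' k, W i k * Wpow W h k j) = _
  refine tsum_eq_sum ?_
  intro m hm
  have : W i m = 0 := by
    by_contra hne
    exact hm ((hfin i).mem_toFinset.mpr hne)
  simp [this]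

lemma pow_succ_abs_le (hfin : ∀ i, ({j | W i j ≠ 0} : Set G).Finite) (h : ℕ) (i j : G) :
    |Wpow W (h + 1) i j| ≤ ∑ m ∈ (hfin i).toFinset, |W i m| * |Wpow W h m j| := by
  rw [pow_succ_eq_sum W hfin h i j]
  refine (Finset.abs_sum_le_sum_abs _ _).trans (le_of_eq ?_)
  exact Finset.sum_congr rfl (fun m _ => abs_mul _ _)

/-- Column supports of powers are finite. -/
lemma colfin (hsym : ∀ i j, W i j = W j i)
    (hfin : ∀ i, ({j | W i j ≠ 0} : Set G).Finite) (h : ℕ) (j : G) :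
    ({k | Wpow W h k j ≠ 0} : Set G).Finite := by
  induction h with
  | zero =>
      refine Set.Finite.subset (Set.finite_singleton j) ?_
      intro k hk
      simp only [Set.mem_setOf_eq, Wpow] at hk
      by_contra hne
      simp [hne] at hk
      exact hne (by simp [hk])
  | succ h ih =>
      have hsub : ({k | Wpow W (h+1) k j ≠ 0} : Set G)
          ⊆ ⋃ m ∈ {m | Wpow W h m j ≠ 0}, {k | W m k ≠ 0} := by
        intro k hk
        simp only [Set.mem_setOf_eq] at hk
        have : ∃ m, W k m * Wpow W h m j ≠ 0 := by
          by_contra hall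
          push_neg at hall
          exact hk (by show (∑' m, W k m * Wpow W h m j) = 0; simp [hall])
        obtain ⟨m, hm⟩ := this
        have h1 : W k m ≠ 0 := fun h0 => hm (by simp [h0])
        have h2 : Wpow W h m j ≠ 0 := fun h0 => hm (by simp [h0])
        refine Set.mem_biUnion h2 ?_
        simp only [Set.mem_setOf_eq]
        rw [hsym m k]; exact h1
      exact Set.Finite.subset (Set.Finite.biUnion ih (fun m _ => hfin m)) hsub

/-- Any finite partial row sum of `|Wpow h|` is at most 1. -/
lemma rowC (hD : 0 < D) (hfin : ∀ i, ({j | W i j ≠ 0} : Set G).Finite)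
    (hcard : ∀ i, ({j | W i j ≠ 0} : Set G).ncard ≤ D)
    (hbd : ∀ i j, |W i j| ≤ 1 / (D : ℝ)) (h : ℕ) (i : G) (F : Finset G) :
    ∑ j ∈ F, |Wpow W h i j| ≤ 1 := by
  classical
  induction h generalizing i with
  | zero =>
      have : ∀ j ∈ F, |Wpow W 0 i j| = if i = j then (1:ℝ) else 0 := by
        intro j _
        show |if i = j then (1:ℝ) else 0| = _
        split <;> simp
      rw [Finset.sum_congr rfl this, Finset.sum_ite_eq]
      split <;> norm_num
  | succ h ih =>
      calc ∑ j ∈ F, |Wpow W (h+1) i j|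
          ≤ ∑ j ∈ F, ∑ m ∈ (hfin i).toFinset, |W i m| * |Wpow W h m j| :=
            Finset.sum_le_sum (fun j _ => pow_succ_abs_le W hfin h i j)
        _ = ∑ m ∈ (hfin i).toFinset, |W i m| * ∑ j ∈ F, |Wpow W h m j| := by
            rw [Finset.sum_comm]
            exact Finset.sum_congr rfl (fun m _ => (Finset.mul_sum _ _ _).symm)
        _ ≤ ∑ m ∈ (hfin i).toFinset, |W i m| * 1 := by
            refine Finset.sum_le_sum (fun m _ => ?_)
            exact mul_le_mul_of_nonneg_left (ih m) (abs_nonneg _)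
        _ = ∑ m ∈ (hfin i).toFinset, |W i m| := by simp
        _ ≤ 1 := rowA W D hD hfin hcard hbd i _

lemma main_fin (hD : 0 < D) (hsym : ∀ i j, W i j = W j i)
    (hfin : ∀ i, ({j | W i j ≠ 0} : Set G).Finite)
    (hcard : ∀ i, ({j | W i j ≠ 0} : Set G).ncard ≤ D)
    (hbd : ∀ i j, |W i j| ≤ 1 / (D : ℝ)) (GN : Finset G) (h : ℕ) :
    ∀ F : Finset G, (∀ k ∈ F, k ∉ GN) →
      ∑ k ∈ F, ∑ j ∈ GN, |Wpow W h k j| ≤ (h : ℝ) * (boundary W GN : ℝ) := by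
  classical
  induction h with
  | zero =>
      intro F hF
      have : ∀ k ∈ F, ∑ j ∈ GN, |Wpow W 0 k j| = 0 := by
        intro k hk
        refine Finset.sum_eq_zero (fun j hj => ?_)
        have : k ≠ j := fun he => hF k hk (he ▸ hj)
        show |if k = j then (1:ℝ) else 0| = 0
        simp [this]
      rw [Finset.sum_congr rfl this]
      simp
  | succ h ih =>
      intro F hF
      set M : Finset G := F.biUnion (fun k => (hfin k).toFinset) with hM
      set A : G → ℝ := fun m => ∑ k ∈ F, |W k m| with hA
      set B : G → ℝ := fun m => ∑ j ∈ GN, |Wpow W h m j| with hB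
      have hAnn : ∀ m, 0 ≤ A m := fun m => Finset.sum_nonneg (fun k _ => abs_nonneg _)
      have hBnn : ∀ m, 0 ≤ B m := fun m => Finset.sum_nonneg (fun j _ => abs_nonneg _)
      have hA1 : ∀ m, A m ≤ 1 := by
        intro m
        have : A m = ∑ k ∈ F, |W m k| := by
          refine Finset.sum_congr rfl (fun k _ => by rw [hsym])
        rw [this]
        exact rowA W D hD hfin hcard hbd m F
      have hB1 : ∀ m, B m ≤ 1 := fun m => rowC W D hD hfin hcard hbd h m GN
      have step1 : ∑ k ∈ F, ∑ j ∈ GN, |Wpow W (h+1) k j|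
          ≤ ∑ m ∈ M, A m * B m := by
        have hle : ∀ k ∈ F, ∑ j ∈ GN, |Wpow W (h+1) k j|
            ≤ ∑ j ∈ GN, ∑ m ∈ M, |W k m| * |Wpow W h m j| := by
          intro k hk
          refine Finset.sum_le_sum (fun j _ => ?_)
          refine (pow_succ_abs_le W hfin h k j).trans ?_
          refine Finset.sum_le_sum_of_subset_of_nonneg ?_ ?_
          · intro m hm
            exact Finset.mem_biUnion.mpr ⟨k, hk, hm⟩
          · intro m _ _
            positivity
        calc ∑ k ∈ F, ∑ j ∈ GN, |Wpow W (h+1) k j|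
            ≤ ∑ k ∈ F, ∑ j ∈ GN, ∑ m ∈ M, |W k m| * |Wpow W h m j| :=
              Finset.sum_le_sum hle
          _ = ∑ k ∈ F, ∑ m ∈ M, ∑ j ∈ GN, |W k m| * |Wpow W h m j| :=
              Finset.sum_congr rfl (fun k _ => Finset.sum_comm)
          _ = ∑ m ∈ M, ∑ k ∈ F, ∑ j ∈ GN, |W k m| * |Wpow W h m j| := Finset.sum_comm
          _ = ∑ m ∈ M, A m * B m := by
              refine Finset.sum_congr rfl (fun m _ => ?_)
              rw [hA, hB, Finset.sum_mul]
              refine Finset.sum_congr rfl (fun k _ => ?_)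
              simp [Finset.mul_sum]
      -- split M into inside / outside GN
      have hsplit : ∑ m ∈ M, A m * B m
          = ∑ m ∈ M.filter (· ∈ GN), A m * B m + ∑ m ∈ M.filter (· ∉ GN), A m * B m :=
        (Finset.sum_filter_add_sum_filter_not M _ _).symm
      -- outside part: ≤ h * δ via ih
      have hout : ∑ m ∈ M.filter (· ∉ GN), A m * B m ≤ (h : ℝ) * (boundary W GN : ℝ) := by
        calc ∑ m ∈ M.filter (· ∉ GN), A m * B m
            ≤ ∑ m ∈ M.filter (· ∉ GN), B m := by
              refine Finset.sum_le_sum (fun m _ => ?_)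
              calc A m * B m ≤ 1 * B m := mul_le_mul_of_nonneg_right (hA1 m) (hBnn m)
                _ = B m := one_mul _
          _ ≤ (h : ℝ) * (boundary W GN : ℝ) := by
              refine ih _ ?_
              intro k hk
              exact (Finset.mem_filter.mp hk).2
      -- inside part: ≤ δ
      have hin : ∑ m ∈ M.filter (· ∈ GN), A m * B m ≤ (boundary W GN : ℝ) := by
        set T : Finset G := (M.filter (· ∈ GN)).filter (fun m => ∃ k ∈ F, W k m ≠ 0) with hT
        have h1 : ∑ m ∈ M.filter (· ∈ GN), A m * B m = ∑ m ∈ T, A m * B m := by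
          refine (Finset.sum_subset (Finset.filter_subset _ _) ?_).symm
          intro m hm hm'
          rw [Finset.mem_filter] at hm'
          have : ∀ k ∈ F, W k m = 0 := by
            intro k hk
            by_contra hne
            exact hm' ⟨hm, k, hk, hne⟩
          have : A m = 0 := Finset.sum_eq_zero (fun k hk => by simp [this k hk])
          simp [this]
        have h2 : ∑ m ∈ T, A m * B m ≤ (T.card : ℝ) := by
          calc ∑ m ∈ T, A m * B m ≤ ∑ m ∈ T, 1 := by
                refine Finset.sum_le_sum (fun m _ => ?_)
                calc A m * B m ≤ 1 * 1 :=
                      mul_le_mul (hA1 m) (hB1 m) (hBnn m) zero_le_one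
                  _ = 1 := one_mul _
            _ = (T.card : ℝ) := by simp
        have h3 : T.card ≤ boundary W GN := by
          have hsub : (↑T : Set G) ⊆ {i | i ∈ GN ∧ ∃ j, j ∉ GN ∧ W i j ≠ 0} := by
            intro m hm
            rw [hT] at hm
            simp only [Finset.coe_filter, Set.mem_setOf_eq, Finset.mem_filter] at hm
            obtain ⟨⟨_, hmGN⟩, k, hkF, hkne⟩ := hm
            refine ⟨hmGN, k, hF k hkF, ?_⟩
            rw [hsym m k]; exact hkne
          have hBfin : ({i | i ∈ GN ∧ ∃ j, j ∉ GN ∧ W i j ≠ 0} : Set G).Finite := by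
            refine Set.Finite.subset GN.finite_toSet (fun x hx => hx.1)
          calc T.card = (↑T : Set G).ncard := (Set.ncard_coe_finset _).symm
            _ ≤ _ := Set.ncard_le_ncard hsub hBfin
        rw [h1]
        exact h2.trans (Nat.cast_le.mpr h3)
      calc ∑ k ∈ F, ∑ j ∈ GN, |Wpow W (h+1) k j| ≤ ∑ m ∈ M, A m * B m := step1
        _ = _ + _ := hsplit
        _ ≤ (boundary W GN : ℝ) + (h : ℝ) * (boundary W GN : ℝ) := add_le_add hin hout
        _ = ((h : ℝ) + 1) * (boundary W GN : ℝ) := by ring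
        _ = ((h + 1 : ℕ) : ℝ) * (boundary W GN : ℝ) := by push_cast; ring


end Aux

/-- porosity factor bound. For every `h ∈ ℕ` and finite `G_N ⊆ G`,
`Σ_{k ∉ G_N} Σ_{j ∈ G_N} |(W^h)(k,j)| ≤ (h+1)·δ_N`; in particular, for any sequence
of finite subsets the porosity factor `Δ_h` is at most `h+1`. -/
theorem stmt2 {G : Type*} [Countable G] (W : G → G → ℝ) (D : ℕ) (hD : 0 < D)
    (hker : KernelHyp W D) (h : ℕ) :
    (∀ GN : Finset G,
      (∑' k : {x : G // x ∉ GN}, ∑ j ∈ GN, |Wpow W h (k : G) j|)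
        ≤ ((h : ℝ) + 1) * (boundary W GN : ℝ)) ∧
    (∀ Gseq : ℕ → Finset G, (∀ N, 0 < boundary W (Gseq N)) →
      (⨆ N : ℕ, (1 / (boundary W (Gseq N) : ℝ)) *
          ∑' k : {x : G // x ∉ Gseq N}, ∑ j ∈ Gseq N, |Wpow W h (k : G) j|)
        ≤ (h : ℝ) + 1) := by
  classical
  obtain ⟨hsym, hfin, hcard, hbd⟩ := hker
  have key : ∀ GN : Finset G,
      (∑' k : {x : G // x ∉ GN}, ∑ j ∈ GN, |Wpow W h (k : G) j|)
        ≤ ((h : ℝ) + 1) * (boundary W GN : ℝ) := by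
    intro GN
    set U : Finset G := GN.biUnion (fun j => (colfin W hsym hfin h j).toFinset) with hU
    set s : Finset {x : G // x ∉ GN} := U.subtype (fun x => x ∉ GN) with hs
    have hzero : ∀ a : {x : G // x ∉ GN}, a ∉ s → (∑ j ∈ GN, |Wpow W h (a : G) j|) = 0 := by
      intro a ha
      refine Finset.sum_eq_zero (fun j hj => ?_)
      have haU : (a : G) ∉ U := by
        intro hmem
        exact ha (Finset.mem_subtype.mpr hmem)
      have : Wpow W h (a : G) j = 0 := by
        by_contra hne
        refine haU (Finset.mem_biUnion.mpr ⟨j, hj, ?_⟩)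
        exact (colfin W hsym hfin h j).mem_toFinset.mpr hne
      simp [this]
    have htsum : (∑' k : {x : G // x ∉ GN}, ∑ j ∈ GN, |Wpow W h (k : G) j|)
        = ∑ k ∈ s, ∑ j ∈ GN, |Wpow W h (k : G) j| := tsum_eq_sum hzero
    rw [htsum]
    set F : Finset G := s.map (Function.Embedding.subtype _) with hF
    have hsum_eq : ∑ k ∈ s, ∑ j ∈ GN, |Wpow W h (k : G) j|
        = ∑ k ∈ F, ∑ j ∈ GN, |Wpow W h k j| := by
      rw [hF, Finset.sum_map]
      simp [Function.Embedding.coe_subtype]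
    rw [hsum_eq]
    have hFmem : ∀ k ∈ F, k ∉ GN := by
      intro k hk
      obtain ⟨a, _, rfl⟩ := Finset.mem_map.mp hk
      exact a.2
    have hb : (0:ℝ) ≤ (boundary W GN : ℝ) := Nat.cast_nonneg _
    calc ∑ k ∈ F, ∑ j ∈ GN, |Wpow W h k j|
        ≤ (h : ℝ) * (boundary W GN : ℝ) := main_fin W D hD hsym hfin hcard hbd GN h F hFmem
      _ ≤ ((h : ℝ) + 1) * (boundary W GN : ℝ) := by
          refine mul_le_mul_of_nonneg_right (by linarith) hb
  refine ⟨key, ?_⟩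
  intro Gseq hpos
  refine ciSup_le (fun N => ?_)
  have hδ : (0:ℝ) < (boundary W (Gseq N) : ℝ) := by exact_mod_cast hpos N
  rw [one_div, inv_mul_le_iff₀ hδ, mul_comm]
  exact key (Gseq N)

end
end
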